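/- arXiv:1006.3502 — 6 statements merged into one kernel-verified Lean document; each statement's English description precedes it below -/
import Mathlib

section
/- For a pure state |ψ⟩ in C^d ⊗ C^d with Schmidt decomposition |ψ⟩ = Σ_i λ_i |ii⟩ (λ_i ≥ 0, Σ_i λ_i² = 1), the fully entangled fraction equals F(|ψ⟩) = (1/d)(Σ_i λ_i)². -/
open Matrix Complex BigOperators Finset

noncomputable section

/-- The maximally entangled state `|ψ⁺⟩ = (1/√d) ∑ₖ |kk⟩` on `ℂ^d ⊗ ℂ^d`. -/
def psiPlus (d : ℕ) : (Fin d × Fin d) → ℂ :=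
  fun p => if p.1 = p.2 then ((1 / Real.sqrt d : ℝ) : ℂ) else 0

/-- `U ⊗ I` acting on `ℂ^d ⊗ ℂ^d`. -/
def tensorI {d : ℕ} (U : Matrix (Fin d) (Fin d) ℂ) :
    Matrix (Fin d × Fin d) (Fin d × Fin d) ℂ :=
  fun p q => U p.1 q.1 * (if p.2 = q.2 then 1 else 0)

/-- The rank-one projector `|ψ⟩⟨ψ|`. -/
def outer {n : Type*} [Fintype n] (ψ : n → ℂ) : Matrix n n ℂ :=
  Matrix.vecMulVec ψ (star ψ)

/-- The fully entangled fraction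
`F(ρ) = max_U ⟨ψ⁺| (U† ⊗ I) ρ (U ⊗ I) |ψ⁺⟩`. -/
def fef (d : ℕ) (ρ : Matrix (Fin d × Fin d) (Fin d × Fin d) ℂ) : ℝ :=
  sSup { x : ℝ | ∃ U ∈ Matrix.unitaryGroup (Fin d) ℂ,
    x = (star (tensorI U *ᵥ psiPlus d) ⬝ᵥ (ρ *ᵥ (tensorI U *ᵥ psiPlus d))).re }

lemma tensorI_mulVec_psiPlus {d : ℕ} (U : Matrix (Fin d) (Fin d) ℂ)
    (p : Fin d × Fin d) :
    (tensorI U *ᵥ psiPlus d) p = U p.1 p.2 * ((1 / Real.sqrt d : ℝ) : ℂ) := by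
  simp only [mulVec, dotProduct, tensorI, psiPlus]
  rw [Finset.sum_eq_single (p.2, p.2)]
  · simp
  · rintro ⟨q1, q2⟩ - hq
    by_cases h1 : p.2 = q2
    · by_cases h2 : q1 = q2
      · exact absurd (by simp [h2, h1.symm] : (q1, q2) = (p.2, p.2)) hq
      · simp [h2]
    · simp [h1]
  · simp

lemma schmidt_val {d : ℕ} (lam : Fin d → ℝ) (U : Matrix (Fin d) (Fin d) ℂ) :
    (star (tensorI U *ᵥ psiPlus d) ⬝ᵥ
      (outer (fun p : Fin d × Fin d => if p.1 = p.2 then (lam p.1 : ℂ) else 0) *ᵥ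
        (tensorI U *ᵥ psiPlus d))).re =
    Complex.normSq (∑ i, (lam i : ℂ) * U i i) * ((1 / Real.sqrt d) ^ 2) := by
  set ψ : (Fin d × Fin d) → ℂ := fun p => if p.1 = p.2 then (lam p.1 : ℂ) else 0 with hψ
  set v : (Fin d × Fin d) → ℂ := tensorI U *ᵥ psiPlus d with hv
  have houter : outer ψ *ᵥ v = fun p => ψ p * (star ψ ⬝ᵥ v) := by
    funext p
    simp only [outer, mulVec, dotProduct, vecMulVec_apply, Pi.star_apply]
    rw [Finset.mul_sum]
    congr 1; funext q; ring
  have hc : star ψ ⬝ᵥ v = (∑ i, (lam i : ℂ) * U i i) * ((1 / Real.sqrt d : ℝ) : ℂ) := by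
    simp only [dotProduct, Pi.star_apply, hψ]
    rw [Fintype.sum_prod_type, Finset.sum_mul]
    congr 1; funext i
    rw [Finset.sum_eq_single i]
    · have := tensorI_mulVec_psiPlus U (i, i)
      simp only [hv]
      rw [this]
      simp only [if_true, RCLike.star_def, Complex.conj_ofReal]
      ring
    · intro j _ hj
      simp [Ne.symm hj]
    · simp
  have hsv : star v ⬝ᵥ (fun p => ψ p * (star ψ ⬝ᵥ v))
      = (starRingEnd ℂ) (star ψ ⬝ᵥ v) * (star ψ ⬝ᵥ v) := by
    simp only [dotProduct, Pi.star_apply, ← mul_assoc]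
    rw [← Finset.sum_mul]
    congr 1
    rw [map_sum]
    congr 1; funext p
    simp only [_root_.map_mul, RCLike.star_def, Complex.conj_conj]
    ring
  rw [houter, hsv, hc]
  rw [show ∀ z : ℂ, (starRingEnd ℂ) z * z = ((Complex.normSq z : ℝ) : ℂ) from
    fun z => by rw [mul_comm, Complex.mul_conj]]
  rw [Complex.ofReal_re, Complex.normSq_mul, Complex.normSq_ofReal, sq]

lemma unitary_diag_abs_le {d : ℕ} {U : Matrix (Fin d) (Fin d) ℂ}
    (hU : U ∈ Matrix.unitaryGroup (Fin d) ℂ) (i : Fin d) : ‖U i i‖ ≤ 1 := by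
  have h := congrFun (congrFun hU.2 i) i
  simp only [Matrix.mul_apply, Matrix.one_apply_eq, Matrix.star_apply] at h
  have hrow : ∑ j, Complex.normSq (U i j) = 1 := by
    simp only [RCLike.star_def] at h
    have h2 : ((∑ j, Complex.normSq (U i j) : ℝ) : ℂ) = 1 := by
      push_cast
      rw [← h]
      congr 1; funext j
      rw [Complex.mul_conj]
    exact_mod_cast h2
  have hle : Complex.normSq (U i i) ≤ 1 := by
    rw [← hrow]
    exact Finset.single_le_sum (fun j _ => Complex.normSq_nonneg _) (Finset.mem_univ i)
  have h3 : ‖U i i‖ ^ 2 ≤ 1 := by rw [Complex.sq_norm]; exact hle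
  nlinarith [norm_nonneg (U i i)]

lemma sum_diag_bound {d : ℕ} (lam : Fin d → ℝ) (hpos : ∀ i, 0 ≤ lam i)
    {U : Matrix (Fin d) (Fin d) ℂ} (hU : U ∈ Matrix.unitaryGroup (Fin d) ℂ) :
    Complex.normSq (∑ i, (lam i : ℂ) * U i i) ≤ (∑ i, lam i) ^ 2 := by
  have habs : ‖∑ i, (lam i : ℂ) * U i i‖ ≤ ∑ i, lam i := by
    calc ‖∑ i, (lam i : ℂ) * U i i‖
        ≤ ∑ i, ‖(lam i : ℂ) * U i i‖ := norm_sum_le _ _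
      _ ≤ ∑ i, lam i := by
          apply Finset.sum_le_sum
          intro i _
          rw [norm_mul, Complex.norm_real, Real.norm_eq_abs, _root_.abs_of_nonneg (hpos i)]
          calc lam i * ‖U i i‖ ≤ lam i * 1 :=
                mul_le_mul_of_nonneg_left (unitary_diag_abs_le hU i) (hpos i)
            _ = lam i := mul_one _
  rw [← Complex.sq_norm]
  have h0 : (0:ℝ) ≤ ‖∑ i, (lam i : ℂ) * U i i‖ := norm_nonneg _
  nlinarith

/-- FEF of a pure state in Schmidt form `|ψ⟩ = ∑ᵢ λᵢ|ii⟩` equals `(1/d)(∑ᵢ λᵢ)²`. -/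
theorem fef_pure_schmidt (d : ℕ) (hd : 0 < d) (lam : Fin d → ℝ)
    (hpos : ∀ i, 0 ≤ lam i) (hnorm : ∑ i, lam i ^ 2 = 1) :
    fef d (outer (fun p : Fin d × Fin d => if p.1 = p.2 then (lam p.1 : ℂ) else 0)) =
      (1 / d) * (∑ i, lam i) ^ 2 := by
  have hsq : ((1 / Real.sqrt d) ^ 2 : ℝ) = 1 / d := by
    rw [div_pow, one_pow, Real.sq_sqrt (Nat.cast_nonneg d)]
  have hmem : ((1:ℝ)/d) * (∑ i, lam i)^2 ∈
      { x : ℝ | ∃ U ∈ Matrix.unitaryGroup (Fin d) ℂ,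
        x = (star (tensorI U *ᵥ psiPlus d) ⬝ᵥ
          ((outer (fun p : Fin d × Fin d => if p.1 = p.2 then (lam p.1 : ℂ) else 0)) *ᵥ
            (tensorI U *ᵥ psiPlus d))).re } := by
    refine ⟨1, Submonoid.one_mem _, ?_⟩
    rw [schmidt_val, hsq]
    simp only [Matrix.one_apply_eq, mul_one]
    rw [show (∑ i, (lam i : ℂ)) = ((∑ i, lam i : ℝ) : ℂ) by push_cast; rfl]
    rw [Complex.normSq_ofReal]
    ring
  have hub : ∀ x ∈ { x : ℝ | ∃ U ∈ Matrix.unitaryGroup (Fin d) ℂ,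
      x = (star (tensorI U *ᵥ psiPlus d) ⬝ᵥ
        ((outer (fun p : Fin d × Fin d => if p.1 = p.2 then (lam p.1 : ℂ) else 0)) *ᵥ
          (tensorI U *ᵥ psiPlus d))).re }, x ≤ ((1:ℝ)/d) * (∑ i, lam i)^2 := by
    rintro x ⟨U, hU, rfl⟩
    rw [schmidt_val, hsq]
    calc Complex.normSq (∑ i, (lam i : ℂ) * U i i) * (1/(d:ℝ))
        ≤ (∑ i, lam i)^2 * (1/(d:ℝ)) :=
          mul_le_mul_of_nonneg_right (sum_diag_bound lam hpos hU) (by positivity)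
      _ = (1/(d:ℝ)) * (∑ i, lam i)^2 := by ring
  unfold fef
  exact le_antisymm (csSup_le ⟨_, hmem⟩ hub)
    (le_csSup ⟨_, hub⟩ hmem)
end
end

section
/- For any mixed state ρ on C^d ⊗ C^d, the concurrence satisfies C(ρ) ≥ max{√(2/(d(d−1))) · (d·F(ρ) − 1), 0}. -/
open Matrix Complex BigOperators Finset ComplexOrder

noncomputable section

/-- Partial trace over the second factor. -/
def ptrace2 {d : ℕ} (M : Matrix (Fin d × Fin d) (Fin d × Fin d) ℂ) :
    Matrix (Fin d) (Fin d) ℂ :=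
  fun a b => ∑ k, M (a, k) (b, k)

/-- Concurrence of a pure state: `C(|ψ⟩) = √(2(1 − tr ρ_A²))`. -/
def pureConcurrence (d : ℕ) (ψ : Fin d × Fin d → ℂ) : ℝ :=
  Real.sqrt (2 * (1 - ((ptrace2 (outer ψ) * ptrace2 (outer ψ)).trace).re))

/-- Concurrence of a mixed state via the convex roof. -/
def concurrence (d : ℕ) (ρ : Matrix (Fin d × Fin d) (Fin d × Fin d) ℂ) : ℝ :=
  sInf { x : ℝ | ∃ (n : ℕ) (p : Fin n → ℝ) (ψ : Fin n → (Fin d × Fin d → ℂ)),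
    (∀ i, 0 ≤ p i) ∧ (∑ i, p i = 1) ∧ (∀ i, ∑ q, ‖ψ i q‖ ^ 2 = 1) ∧
    (ρ = ∑ i, p i • outer (ψ i)) ∧ x = ∑ i, p i * pureConcurrence d (ψ i) }

/-! ### Auxiliary lemmas -/

lemma conj_mul_self' (z : ℂ) : (starRingEnd ℂ) z * z = ((‖z‖ ^ 2 : ℝ) : ℂ) := by
  rw [mul_comm, Complex.mul_conj, Complex.normSq_eq_norm_sq]

lemma colsq {n : Type*} [Fintype n] [DecidableEq n] (X : Matrix n n ℂ) (i : n) :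
    (Xᴴ * X) i i = ((∑ a, ‖X a i‖ ^ 2 : ℝ) : ℂ) := by
  simp only [Matrix.mul_apply, Matrix.conjTranspose_apply, Matrix.star_apply,
    RingHom.coe_coe]
  rw [Complex.ofReal_sum]
  exact Finset.sum_congr rfl fun a _ => conj_mul_self' _

lemma entry_cs {d : ℕ} (X Y : Matrix (Fin d) (Fin d) ℂ) (i : Fin d) :
    ‖(Xᴴ * Y) i i‖ ≤ Real.sqrt (∑ a, ‖X a i‖ ^ 2) * Real.sqrt (∑ a, ‖Y a i‖ ^ 2) := by
  let x : EuclideanSpace ℂ (Fin d) := WithLp.toLp 2 (fun a => X a i)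
  let y : EuclideanSpace ℂ (Fin d) := WithLp.toLp 2 (fun a => Y a i)
  have h1 : (Xᴴ * Y) i i = inner ℂ x y := by
    simp [Matrix.mul_apply, Matrix.conjTranspose_apply, PiLp.inner_apply,
      RCLike.inner_apply, x, y, mul_comm]
  have h2 := norm_inner_le_norm (𝕜 := ℂ) x y
  rw [EuclideanSpace.norm_eq, EuclideanSpace.norm_eq] at h2
  rw [h1]
  simpa using h2

lemma trace_conj {d : ℕ} (V A : Matrix (Fin d) (Fin d) ℂ) (hV : V * Vᴴ = 1) :
    (Vᴴ * A * V).trace = A.trace := by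
  rw [Matrix.trace_mul_cycle, hV, Matrix.one_mul]

lemma offDiag_sum {d : ℕ} (f : Fin d → ℝ) :
    ∑ p ∈ (univ : Finset (Fin d)).offDiag, f p.1 * f p.2
      = (∑ i, f i) ^ 2 - ∑ i, f i * f i := by
  have h3 := Finset.sum_union (f := fun p : Fin d × Fin d => f p.1 * f p.2)
    (Finset.disjoint_diag_offDiag (univ : Finset (Fin d)))
  rw [Finset.diag_union_offDiag] at h3
  have h2 : ∑ p ∈ (univ ×ˢ univ : Finset (Fin d × Fin d)), f p.1 * f p.2
      = (∑ i, f i) ^ 2 := by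
    rw [Finset.sum_product, sq, Finset.sum_mul_sum]
  have h1 : ∑ p ∈ (univ : Finset (Fin d)).diag, f p.1 * f p.2 = ∑ i, f i * f i :=
    Finset.sum_diag _ _
  rw [h2, h1] at h3
  linarith

lemma real_ineq (d : ℕ) (hd : 2 ≤ d) (lam : Fin d → ℝ) (h0 : ∀ i, 0 ≤ lam i)
    (h1 : ∑ i, lam i = 1) :
    Real.sqrt (2 / (d * (d - 1))) * ((∑ i, Real.sqrt (lam i)) ^ 2 - 1)
      ≤ Real.sqrt (2 * (1 - ∑ i, lam i ^ 2)) := by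
  have hdR : (2 : ℝ) ≤ (d : ℝ) := by exact_mod_cast hd
  have hdd : (0 : ℝ) < (d : ℝ) * ((d : ℝ) - 1) := by nlinarith
  set s := ∑ i, Real.sqrt (lam i) with hs
  set t := ∑ i, lam i ^ 2 with ht
  have ht1 : t ≤ 1 := by
    have := Finset.sum_sq_le_sq_sum_of_nonneg (s := (univ : Finset (Fin d)))
      (f := lam) (fun i _ => h0 i)
    rwa [h1, one_pow] at this
  have hsq : ∀ i, Real.sqrt (lam i) * Real.sqrt (lam i) = lam i :=
    fun i => Real.mul_self_sqrt (h0 i)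
  have hoff1 : ∑ p ∈ (univ : Finset (Fin d)).offDiag,
      Real.sqrt (lam p.1) * Real.sqrt (lam p.2) = s ^ 2 - 1 := by
    rw [offDiag_sum (fun i => Real.sqrt (lam i))]
    simp only [hsq]
    rw [h1]
  have hoff2 : ∑ p ∈ (univ : Finset (Fin d)).offDiag, lam p.1 * lam p.2 = 1 - t := by
    rw [offDiag_sum lam, h1, one_pow]
    congr 1
    exact Finset.sum_congr rfl fun i _ => (sq (lam i)).symm ▸ (pow_two (lam i)).symm
  have hcs := Finset.sum_mul_sq_le_sq_mul_sq ((univ : Finset (Fin d)).offDiag)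
    (fun _ => (1 : ℝ)) (fun p => Real.sqrt (lam p.1) * Real.sqrt (lam p.2))
  simp only [one_mul, one_pow] at hcs
  have hcard : ∑ _p ∈ (univ : Finset (Fin d)).offDiag, (1 : ℝ)
      = (d : ℝ) * (d : ℝ) - (d : ℝ) := by
    rw [Finset.sum_const, Finset.offDiag_card]
    simp only [Finset.card_univ, Fintype.card_fin, nsmul_eq_mul, mul_one]
    have : d ≤ d * d := Nat.le_mul_of_pos_left d (by omega)
    push_cast [Nat.cast_sub this]
    ring
  have hsqsum : ∑ p ∈ (univ : Finset (Fin d)).offDiag,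
      (Real.sqrt (lam p.1) * Real.sqrt (lam p.2)) ^ 2 = 1 - t := by
    rw [← hoff2]
    refine Finset.sum_congr rfl fun p hp => ?_
    rw [mul_pow, Real.sq_sqrt (h0 p.1), Real.sq_sqrt (h0 p.2)]
  rw [hoff1, hcard, hsqsum] at hcs
  rcases le_or_gt (s ^ 2 - 1) 0 with hneg | hpos
  · exact le_trans (mul_nonpos_of_nonneg_of_nonpos (Real.sqrt_nonneg _) hneg)
      (Real.sqrt_nonneg _)
  · have hc0 : (0 : ℝ) ≤ 2 / ((d : ℝ) * ((d : ℝ) - 1)) := by positivity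
    have key : 2 / ((d : ℝ) * ((d : ℝ) - 1)) * (s ^ 2 - 1) ^ 2 ≤ 2 * (1 - t) := by
      rw [div_mul_eq_mul_div, div_le_iff₀ hdd]
      nlinarith [hcs]
    calc Real.sqrt (2 / ((d : ℝ) * ((d : ℝ) - 1))) * (s ^ 2 - 1)
        = Real.sqrt (2 / ((d : ℝ) * ((d : ℝ) - 1)) * (s ^ 2 - 1) ^ 2) := by
          rw [Real.sqrt_mul hc0, Real.sqrt_sq hpos.le]
      _ ≤ Real.sqrt (2 * (1 - t)) := Real.sqrt_le_sqrt key
lemma pure_bound (d : ℕ) (hd : 2 ≤ d) (ψ : Fin d × Fin d → ℂ)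
    (hψ : ∑ q, ‖ψ q‖ ^ 2 = 1) (U : Matrix (Fin d) (Fin d) ℂ)
    (hU : U ∈ Matrix.unitaryGroup (Fin d) ℂ) :
    Real.sqrt (2 / (d * (d - 1))) *
      ((d : ℝ) * (star (tensorI U *ᵥ psiPlus d) ⬝ᵥ
        (outer ψ *ᵥ (tensorI U *ᵥ psiPlus d))).re - 1)
      ≤ pureConcurrence d ψ := by
  have hd0 : (0 : ℝ) < (d : ℝ) := by
    have : 0 < d := by omega
    exact_mod_cast this
  -- the entangled test vector
  set φ := tensorI U *ᵥ psiPlus d with hφdef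
  have hφ : ∀ p : Fin d × Fin d, φ p = ((1 / Real.sqrt d : ℝ) : ℂ) * U p.1 p.2 := by
    intro p
    simp only [hφdef, Matrix.mulVec, dotProduct, tensorI, psiPlus]
    rw [Fintype.sum_prod_type]
    simp [Finset.sum_ite_eq, mul_comm]
  set M : Matrix (Fin d) (Fin d) ℂ := Matrix.of (fun a b => ψ (a, b)) with hM
  set T : ℂ := (Uᴴ * M).trace with hT
  set z : ℂ := star φ ⬝ᵥ ψ with hz
  have hQ : star φ ⬝ᵥ (outer ψ *ᵥ φ) = z * (starRingEnd ℂ) z := by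
    simp only [hz, outer, Matrix.mulVec, dotProduct, Matrix.vecMulVec_apply,
      Pi.star_apply, map_sum, _root_.map_mul, RingHom.coe_coe, Complex.conj_conj,
      RCLike.star_def]
    rw [Finset.sum_mul_sum]
    simp only [Finset.mul_sum]
    refine Finset.sum_congr rfl fun a _ => Finset.sum_congr rfl fun q _ => by ring
  have hzT : z = ((1 / Real.sqrt d : ℝ) : ℂ) * T := by
    simp only [hz, dotProduct, Pi.star_apply, RCLike.star_def, hT, Matrix.trace,
      Matrix.diag, Matrix.mul_apply, Matrix.conjTranspose_apply]
    rw [Fintype.sum_prod_type, Finset.mul_sum]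
    rw [Finset.sum_comm]
    refine Finset.sum_congr rfl fun b _ => ?_
    rw [Finset.mul_sum]
    refine Finset.sum_congr rfl fun a _ => ?_
    simp only [hφ, _root_.map_mul, Complex.conj_ofReal, hM, Matrix.of_apply,
      RCLike.star_def]
    ring
  have hre : ∀ w : ℂ, (w * (starRingEnd ℂ) w).re = ‖w‖ ^ 2 := by
    intro w
    rw [mul_comm, conj_mul_self']
    exact Complex.ofReal_re _
  have hdQ : (d : ℝ) * (star φ ⬝ᵥ (outer ψ *ᵥ φ)).re = ‖T‖ ^ 2 := by
    rw [hQ, hre, hzT]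
    rw [norm_mul, mul_pow, Complex.norm_real]
    rw [Real.norm_eq_abs, _root_.abs_of_nonneg (by positivity : (0:ℝ) ≤ 1 / Real.sqrt d)]
    rw [div_pow, one_pow, Real.sq_sqrt hd0.le]
    field_simp
  set H := Mᴴ * M with hHdef
  have hH : H.PosSemidef := Matrix.posSemidef_conjTranspose_mul_self M
  set V : Matrix (Fin d) (Fin d) ℂ := ↑(hH.1.eigenvectorUnitary) with hVdef
  set lam : Fin d → ℝ := hH.1.eigenvalues with hlam
  have hVmem := (hH.1.eigenvectorUnitary).2
  have hV1 : Vᴴ * V = 1 := by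
    have := (Unitary.mem_iff.mp hVmem).1
    rwa [Matrix.star_eq_conjTranspose] at this
  have hV1' : V * Vᴴ = 1 := by
    have := (Unitary.mem_iff.mp hVmem).2
    rwa [Matrix.star_eq_conjTranspose] at this
  have hU1 : Uᴴ * U = 1 := by
    have := (Unitary.mem_iff.mp hU).1
    rwa [Matrix.star_eq_conjTranspose] at this
  have hdiagH : Vᴴ * H * V = Matrix.diagonal (fun i => (lam i : ℂ)) := by
    have := hH.1.conjStarAlgAut_star_eigenvectorUnitary
    rw [Unitary.conjStarAlgAut_star_apply, Matrix.star_eq_conjTranspose] at this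
    exact this
  have hspec : H = V * Matrix.diagonal (fun i => (lam i : ℂ)) * Vᴴ := by
    have := hH.1.spectral_theorem
    rw [Unitary.conjStarAlgAut_apply, Matrix.star_eq_conjTranspose] at this
    exact this
  have hlam0 : ∀ i, 0 ≤ lam i := fun i => hH.eigenvalues_nonneg i
  have htrH : H.trace = ((1 : ℝ) : ℂ) := by
    have h1 : H.trace = ((∑ q : Fin d × Fin d, ‖ψ q‖ ^ 2 : ℝ) : ℂ) := by
      rw [Matrix.trace]
      simp only [Matrix.diag, hHdef, colsq]
      rw [← Complex.ofReal_sum]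
      congr 1
      rw [Fintype.sum_prod_type, Finset.sum_comm]
      refine Finset.sum_congr rfl fun b _ => Finset.sum_congr rfl fun a _ => by
        rw [hM]; rfl
    rw [h1, hψ]
  have htrdiag : H.trace = ((∑ i, lam i : ℝ) : ℂ) := by
    rw [hspec, Matrix.trace_mul_cycle, hV1, Matrix.one_mul, Matrix.trace_diagonal]
    rw [Complex.ofReal_sum]
  have hsum : ∑ i, lam i = 1 := by
    have := htrdiag.symm.trans htrH
    exact_mod_cast this
  have hpt : ptrace2 (outer ψ) = M * Mᴴ := by
    ext a b
    simp [ptrace2, outer, Matrix.vecMulVec_apply, Matrix.mul_apply,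
      Matrix.conjTranspose_apply, hM]
  have hsumsq : ((ptrace2 (outer ψ) * ptrace2 (outer ψ)).trace).re = ∑ i, lam i ^ 2 := by
    rw [hpt]
    have hc1 : M * Mᴴ * (M * Mᴴ) = M * (Mᴴ * (M * Mᴴ)) := by
      simp only [Matrix.mul_assoc]
    have hc2 : Mᴴ * M * Mᴴ * M = H * H := by
      simp only [hHdef, Matrix.mul_assoc]
    have hHH : (H * H).trace = ((∑ i, lam i ^ 2 : ℝ) : ℂ) := by
      rw [hspec]
      have : V * Matrix.diagonal (fun i => (lam i : ℂ)) * Vᴴ *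
          (V * Matrix.diagonal (fun i => (lam i : ℂ)) * Vᴴ)
          = V * (Matrix.diagonal (fun i => (lam i : ℂ)) *
            Matrix.diagonal (fun i => (lam i : ℂ))) * Vᴴ := by
        simp only [← Matrix.mul_assoc]
        rw [Matrix.mul_assoc (V * Matrix.diagonal (fun i => (lam i : ℂ))) Vᴴ V, hV1,
          Matrix.mul_one]
      rw [this, Matrix.trace_mul_cycle, hV1, Matrix.one_mul,
        Matrix.diagonal_mul_diagonal, Matrix.trace_diagonal]
      push_cast
      refine Finset.sum_congr rfl fun i _ => by ring
    rw [hc1, Matrix.trace_mul_comm, ← Matrix.mul_assoc, hc2, hHH]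
    exact Complex.ofReal_re _
  -- trace bound: ‖T‖ ≤ ∑ √λ
  have hTbound : ‖T‖ ≤ ∑ i, Real.sqrt (lam i) := by
    have h1 : T = ((U * V)ᴴ * (M * V)).trace := by
      rw [hT, ← trace_conj V (Uᴴ * M) hV1']
      congr 1
      rw [Matrix.conjTranspose_mul]
      simp only [Matrix.mul_assoc]
    have hX : (U * V)ᴴ * (U * V) = 1 := by
      rw [Matrix.conjTranspose_mul]
      calc Vᴴ * Uᴴ * (U * V) = Vᴴ * (Uᴴ * U) * V := by simp only [Matrix.mul_assoc]
        _ = 1 := by rw [hU1, Matrix.mul_one, hV1]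
    have hcolX : ∀ i, ∑ a, ‖(U * V) a i‖ ^ 2 = 1 := by
      intro i
      have h := (colsq (U * V) i).symm
      rw [hX] at h
      have : ((∑ a, ‖(U * V) a i‖ ^ 2 : ℝ) : ℂ) = ((1 : ℝ) : ℂ) := by
        rw [h]; simp [Matrix.one_apply]
      exact_mod_cast this
    have hcolY : ∀ i, ∑ a, ‖(M * V) a i‖ ^ 2 = lam i := by
      intro i
      have h := (colsq (M * V) i).symm
      have h2 : (M * V)ᴴ * (M * V) = Vᴴ * H * V := by
        rw [Matrix.conjTranspose_mul]
        simp only [hHdef, Matrix.mul_assoc]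
      rw [h2, hdiagH] at h
      have : ((∑ a, ‖(M * V) a i‖ ^ 2 : ℝ) : ℂ) = ((lam i : ℝ) : ℂ) := by
        rw [h]; simp [Matrix.diagonal_apply_eq]
      exact_mod_cast this
    rw [h1, Matrix.trace]
    calc ‖∑ i, Matrix.diag ((U * V)ᴴ * (M * V)) i‖
        ≤ ∑ i, ‖((U * V)ᴴ * (M * V)) i i‖ := norm_sum_le _ _
      _ ≤ ∑ i, Real.sqrt (lam i) := by
          refine Finset.sum_le_sum fun i _ => ?_
          have hce := entry_cs (U * V) (M * V) i
          rwa [hcolX i, hcolY i, Real.sqrt_one, one_mul] at hce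
  -- final assembly
  have hs0 : (0 : ℝ) ≤ ∑ i, Real.sqrt (lam i) :=
    Finset.sum_nonneg fun i _ => Real.sqrt_nonneg _
  have hT2 : ‖T‖ ^ 2 ≤ (∑ i, Real.sqrt (lam i)) ^ 2 :=
    pow_le_pow_left₀ (norm_nonneg _) hTbound 2
  have hstep : (d : ℝ) * (star φ ⬝ᵥ (outer ψ *ᵥ φ)).re - 1
      ≤ (∑ i, Real.sqrt (lam i)) ^ 2 - 1 := by
    rw [hdQ]; linarith
  calc Real.sqrt (2 / (d * ((d : ℝ) - 1))) *
      ((d : ℝ) * (star φ ⬝ᵥ (outer ψ *ᵥ φ)).re - 1)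
      ≤ Real.sqrt (2 / (d * ((d : ℝ) - 1))) * ((∑ i, Real.sqrt (lam i)) ^ 2 - 1) :=
        mul_le_mul_of_nonneg_left hstep (Real.sqrt_nonneg _)
    _ ≤ Real.sqrt (2 * (1 - ∑ i, lam i ^ 2)) := real_ineq d hd lam hlam0 hsum
    _ = pureConcurrence d ψ := by rw [pureConcurrence, hsumsq]

/-- Spectral decomposition of a PSD density matrix gives an element of the
concurrence decomposition set. -/
lemma decomp_nonempty (d : ℕ) (ρ : Matrix (Fin d × Fin d) (Fin d × Fin d) ℂ)
    (hpsd : ρ.PosSemidef) (htr : ρ.trace = 1) :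
    ∃ (n : ℕ) (p : Fin n → ℝ) (ψ : Fin n → (Fin d × Fin d → ℂ)),
      (∀ i, 0 ≤ p i) ∧ (∑ i, p i = 1) ∧ (∀ i, ∑ q, ‖ψ i q‖ ^ 2 = 1) ∧
      (ρ = ∑ i, p i • outer (ψ i)) := by
  have hsd := hpsd.1
  set W : Matrix (Fin d × Fin d) (Fin d × Fin d) ℂ := ↑(hsd.eigenvectorUnitary) with hWdef
  set μ : Fin d × Fin d → ℝ := hsd.eigenvalues with hμ
  have hWmem := (hsd.eigenvectorUnitary).2
  have hW1 : Wᴴ * W = 1 := by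
    have := (Unitary.mem_iff.mp hWmem).1
    rwa [Matrix.star_eq_conjTranspose] at this
  have hspec : ρ = W * Matrix.diagonal (fun j => (μ j : ℂ)) * Wᴴ := by
    have := hsd.spectral_theorem
    rw [Unitary.conjStarAlgAut_apply, Matrix.star_eq_conjTranspose] at this
    exact this
  have hμ0 : ∀ j, 0 ≤ μ j := fun j => hpsd.eigenvalues_nonneg j
  have hμsum : ∑ j, μ j = 1 := by
    have h1 : ρ.trace = ((∑ j, μ j : ℝ) : ℂ) := by
      rw [hspec, Matrix.trace_mul_cycle, hW1, Matrix.one_mul, Matrix.trace_diagonal,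
        Complex.ofReal_sum]
    rw [htr] at h1
    exact_mod_cast h1.symm
  have hcol : ∀ j, ∑ q, ‖W q j‖ ^ 2 = 1 := by
    intro j
    have h := (colsq W j).symm
    rw [hW1] at h
    have : ((∑ q, ‖W q j‖ ^ 2 : ℝ) : ℂ) = ((1 : ℝ) : ℂ) := by
      rw [h]; simp [Matrix.one_apply]
    exact_mod_cast this
  have hdecomp : ρ = ∑ j : Fin d × Fin d, μ j • outer (fun q => W q j) := by
    rw [hspec]
    ext a b
    rw [Matrix.sum_apply]
    rw [Matrix.mul_apply]
    simp only [Matrix.mul_diagonal, Matrix.conjTranspose_apply, Matrix.smul_apply,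
      outer, Matrix.vecMulVec_apply, Pi.star_apply, RCLike.star_def, Complex.real_smul]
    refine Finset.sum_congr rfl fun j _ => ?_
    ring
  exact ⟨d * d, fun i => μ (finProdFinEquiv.symm i),
    fun i q => W q (finProdFinEquiv.symm i),
    fun i => hμ0 _,
    by rw [Equiv.sum_comp finProdFinEquiv.symm (fun j => μ j)]; exact hμsum,
    fun i => hcol _,
    by rw [Equiv.sum_comp finProdFinEquiv.symm
         (fun j => μ j • outer (fun q => W q j))]; exact hdecomp⟩

/-- `C(ρ) ≥ max{√(2/(d(d−1))) (d F(ρ) − 1), 0}`. -/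
theorem concurrence_ge_fef (d : ℕ) (hd : 2 ≤ d)
    (ρ : Matrix (Fin d × Fin d) (Fin d × Fin d) ℂ)
    (hpsd : ρ.PosSemidef) (htr : ρ.trace = 1) :
    concurrence d ρ ≥
      max (Real.sqrt (2 / (d * (d - 1))) * (d * fef d ρ - 1)) 0 := by
  have hd0 : (0 : ℝ) < (d : ℝ) := by
    have : 0 < d := by omega
    exact_mod_cast this
  have hdR : (2 : ℝ) ≤ (d : ℝ) := by exact_mod_cast hd
  set c : ℝ := Real.sqrt (2 / (d * ((d : ℝ) - 1))) with hc
  have hc0 : 0 < c := by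
    rw [hc]
    apply Real.sqrt_pos.mpr
    have : (0 : ℝ) < (d : ℝ) * ((d : ℝ) - 1) := by nlinarith
    positivity
  rw [ge_iff_le, concurrence]
  have hne : { x : ℝ | ∃ (n : ℕ) (p : Fin n → ℝ) (ψ : Fin n → (Fin d × Fin d → ℂ)),
      (∀ i, 0 ≤ p i) ∧ (∑ i, p i = 1) ∧ (∀ i, ∑ q, ‖ψ i q‖ ^ 2 = 1) ∧
      (ρ = ∑ i, p i • outer (ψ i)) ∧
      x = ∑ i, p i * pureConcurrence d (ψ i) }.Nonempty := by
    obtain ⟨n, p, ψ, h1, h2, h3, h4⟩ := decomp_nonempty d ρ hpsd htr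
    exact ⟨_, n, p, ψ, h1, h2, h3, h4, rfl⟩
  refine le_csInf hne ?_
  rintro x ⟨n, p, ψs, hp, hp1, hnorm, hρ, hx⟩
  have hx0 : 0 ≤ x := by
    rw [hx]
    exact Finset.sum_nonneg fun i _ =>
      mul_nonneg (hp i) (Real.sqrt_nonneg _)
  refine max_le ?_ hx0
  -- main bound
  have hρv : ∀ (φv : Fin d × Fin d → ℂ),
      (star φv ⬝ᵥ (ρ *ᵥ φv)).re
        = ∑ i, p i * (star φv ⬝ᵥ (outer (ψs i) *ᵥ φv)).re := by
    intro φv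
    have h1 : star φv ⬝ᵥ (ρ *ᵥ φv)
        = ∑ i, ((p i : ℝ) : ℂ) * (star φv ⬝ᵥ (outer (ψs i) *ᵥ φv)) := by
      have hsmv : (∑ i, p i • outer (ψs i)) *ᵥ φv
          = ∑ i, p i • (outer (ψs i) *ᵥ φv) := by
        ext a
        simp only [Matrix.mulVec, dotProduct, Matrix.sum_apply, Finset.sum_apply,
          Matrix.smul_apply, Finset.sum_mul, Pi.smul_apply, smul_mul_assoc]
        rw [Finset.sum_comm]
        exact Finset.sum_congr rfl fun i _ => (Finset.smul_sum).symm
      have hdps : star φv ⬝ᵥ (∑ i, p i • (outer (ψs i) *ᵥ φv))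
          = ∑ i, ((p i : ℝ) : ℂ) * (star φv ⬝ᵥ (outer (ψs i) *ᵥ φv)) := by
        simp only [dotProduct, Finset.sum_apply, Pi.smul_apply, Finset.mul_sum,
          Complex.real_smul]
        rw [Finset.sum_comm]
        refine Finset.sum_congr rfl fun i _ => Finset.sum_congr rfl fun a _ => by ring
      rw [hρ, hsmv, hdps]
    rw [h1, Complex.re_sum]
    exact Finset.sum_congr rfl fun i _ => Complex.re_ofReal_mul _ _
  -- bound each fef candidate
  have hub : ∀ y ∈ { y : ℝ | ∃ U ∈ Matrix.unitaryGroup (Fin d) ℂ,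
      y = (star (tensorI U *ᵥ psiPlus d) ⬝ᵥ (ρ *ᵥ (tensorI U *ᵥ psiPlus d))).re },
      y ≤ (x / c + 1) / d := by
    rintro y ⟨U, hU, rfl⟩
    set φv := tensorI U *ᵥ psiPlus d with hφv
    set y := (star φv ⬝ᵥ (ρ *ᵥ φv)).re with hy
    have hkey : c * ((d : ℝ) * y - 1) ≤ x := by
      have hyd : (d : ℝ) * y - 1
          = ∑ i, p i * ((d : ℝ) * (star φv ⬝ᵥ (outer (ψs i) *ᵥ φv)).re - 1) := by
        have : ∑ i, p i * ((d : ℝ) * (star φv ⬝ᵥ (outer (ψs i) *ᵥ φv)).re - 1)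
            = (d : ℝ) * (∑ i, p i * (star φv ⬝ᵥ (outer (ψs i) *ᵥ φv)).re)
              - ∑ i, p i := by
          rw [Finset.mul_sum, ← Finset.sum_sub_distrib]
          exact Finset.sum_congr rfl fun i _ => by ring
        rw [this, hp1, ← hρv φv, ← hy]
      rw [hyd, Finset.mul_sum, hx]
      refine Finset.sum_le_sum fun i _ => ?_
      have hterm := pure_bound d hd (ψs i) (hnorm i) U hU
      calc c * (p i * ((d : ℝ) * (star φv ⬝ᵥ (outer (ψs i) *ᵥ φv)).re - 1))
          = p i * (c * ((d : ℝ) * (star φv ⬝ᵥ (outer (ψs i) *ᵥ φv)).re - 1)) := by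
            ring
        _ ≤ p i * pureConcurrence d (ψs i) :=
            mul_le_mul_of_nonneg_left hterm (hp i)
    have h2 : (d : ℝ) * y - 1 ≤ x / c := by
      rw [le_div_iff₀ hc0]
      linarith [hkey, mul_comm c ((d : ℝ) * y - 1)]
    rw [le_div_iff₀ hd0]
    linarith
  have hneF : { y : ℝ | ∃ U ∈ Matrix.unitaryGroup (Fin d) ℂ,
      y = (star (tensorI U *ᵥ psiPlus d) ⬝ᵥ (ρ *ᵥ (tensorI U *ᵥ psiPlus d))).re }.Nonempty :=
    ⟨_, 1, one_mem _, rfl⟩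
  have hF : fef d ρ ≤ (x / c + 1) / d := csSup_le hneF hub
  have h3 : (d : ℝ) * fef d ρ - 1 ≤ x / c := by
    have := mul_le_mul_of_nonneg_left hF hd0.le
    rw [mul_div_assoc'] at this
    have h4 : (d : ℝ) * ((x / c + 1) / d) = x / c + 1 := by
      field_simp
    nlinarith [hF, hd0]
  calc c * ((d : ℝ) * fef d ρ - 1) ≤ c * (x / c) :=
      mul_le_mul_of_nonneg_left h3 hc0.le
    _ = x := by rw [mul_comm, div_mul_cancel₀ x hc0.ne']
end
end

section
/- FEF does not equal the convex roof of pure-state FEF: for ρ = (1/2)(|00⟩⟨00| + |11⟩⟨11|) in C²⊗C², F(ρ) = 1/2, yet every pure-state decomposition {p_i, |ψ_i⟩} of ρ satisfies Σ_i p_i F(|ψ_i⟩) ≥ 1/2, with strict inequality for every decomposition other than the eigendecomposition. -/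
open Matrix Complex BigOperators Finset

noncomputable section

/-- `|00⟩` in `ℂ² ⊗ ℂ²`. -/
def ket00 : Fin 2 × Fin 2 → ℂ := fun p => if p = (0, 0) then 1 else 0

/-- `|11⟩` in `ℂ² ⊗ ℂ²`. -/
def ket11 : Fin 2 × Fin 2 → ℂ := fun p => if p = (1, 1) then 1 else 0

lemma vecU (U : Matrix (Fin 2) (Fin 2) ℂ) :
    tensorI U *ᵥ psiPlus 2 = fun p => U p.1 p.2 * ((Real.sqrt 2)⁻¹ : ℝ) := by
  funext p
  simp [mulVec, tensorI, psiPlus, dotProduct, Fintype.sum_prod_type, Fin.sum_univ_two]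

lemma outer_quad {n : Type*} [Fintype n] (ψ v : n → ℂ) :
    (star v ⬝ᵥ (outer ψ *ᵥ v)).re = Complex.normSq (star v ⬝ᵥ ψ) := by
  have h1 : outer ψ *ᵥ v = (star ψ ⬝ᵥ v) • ψ := by
    funext i
    simp [outer, mulVec, vecMulVec, dotProduct, Finset.mul_sum, mul_comm, mul_left_comm]
  rw [h1]
  have h2 : star ψ ⬝ᵥ v = star (star v ⬝ᵥ ψ) := by
    rw [Matrix.star_dotProduct]
  rw [h2, dotProduct_smul, smul_eq_mul, mul_comm]
  simp [Complex.star_def, Complex.mul_conj]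

lemma dotform (U : Matrix (Fin 2) (Fin 2) ℂ) (ψ : Fin 2 × Fin 2 → ℂ) :
    star (tensorI U *ᵥ psiPlus 2) ⬝ᵥ ψ =
    ((Real.sqrt 2)⁻¹ : ℝ) * (starRingEnd ℂ (U 0 0) * ψ (0,0) + starRingEnd ℂ (U 0 1) * ψ (0,1)
      + starRingEnd ℂ (U 1 0) * ψ (1,0) + starRingEnd ℂ (U 1 1) * ψ (1,1)) := by
  rw [vecU]
  simp [dotProduct, Fintype.sum_prod_type, Fin.sum_univ_two]
  ring

lemma normSq_half (z : ℂ) : Complex.normSq (((Real.sqrt 2)⁻¹ : ℝ) * z) = Complex.normSq z / 2 := by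
  rw [Complex.normSq_mul, Complex.normSq_ofReal]
  rw [← Real.sqrt_inv]
  rw [Real.mul_self_sqrt (by norm_num)]
  ring

lemma pure_val (U : Matrix (Fin 2) (Fin 2) ℂ) (ψ : Fin 2 × Fin 2 → ℂ) :
    (star (tensorI U *ᵥ psiPlus 2) ⬝ᵥ (outer ψ *ᵥ (tensorI U *ᵥ psiPlus 2))).re =
    Complex.normSq (starRingEnd ℂ (U 0 0) * ψ (0,0) + starRingEnd ℂ (U 0 1) * ψ (0,1)
      + starRingEnd ℂ (U 1 0) * ψ (1,0) + starRingEnd ℂ (U 1 1) * ψ (1,1)) / 2 := by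
  rw [outer_quad, dotform, normSq_half]

lemma rho_val (U : Matrix (Fin 2) (Fin 2) ℂ) :
    (star (tensorI U *ᵥ psiPlus 2) ⬝ᵥ
      (((1 / 2 : ℝ) • (outer ket00 + outer ket11)) *ᵥ (tensorI U *ᵥ psiPlus 2))).re =
    (Complex.normSq (U 0 0) + Complex.normSq (U 1 1)) / 4 := by
  set v := tensorI U *ᵥ psiPlus 2 with hv
  have h1 : ((1 / 2 : ℝ) • (outer ket00 + outer ket11)) *ᵥ v
      = (1 / 2 : ℝ) • ((outer ket00 *ᵥ v) + (outer ket11 *ᵥ v)) := by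
    rw [Matrix.smul_mulVec, Matrix.add_mulVec]
  rw [h1, dotProduct_smul]
  have h2 : star v ⬝ᵥ (outer ket00 *ᵥ v + outer ket11 *ᵥ v)
      = star v ⬝ᵥ (outer ket00 *ᵥ v) + star v ⬝ᵥ (outer ket11 *ᵥ v) :=
    dotProduct_add _ _ _
  rw [h2]
  have hre : ∀ (r : ℝ) (z : ℂ), (r • z).re = r * z.re := by
    intro r z; simp [Complex.real_smul]
  rw [hre, Complex.add_re, outer_quad, outer_quad, hv, dotform, dotform]
  simp only [ket00, ket11]
  norm_num [normSq_half]
  ring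

lemma row_normSq {U : Matrix (Fin 2) (Fin 2) ℂ} (hU : U ∈ Matrix.unitaryGroup (Fin 2) ℂ)
    (i : Fin 2) : Complex.normSq (U i 0) + Complex.normSq (U i 1) = 1 := by
  have h := hU.2
  have h2 := congrFun (congrFun h i) i
  simp [Matrix.mul_apply, Fin.sum_univ_two, Matrix.one_apply] at h2
  have : U i 0 * (starRingEnd ℂ) (U i 0) + U i 1 * (starRingEnd ℂ) (U i 1) = 1 := by
    simpa [Matrix.conjTranspose_apply] using h2
  have := congrArg Complex.re this
  simpa [Complex.mul_conj] using this


lemma fef_rho : fef 2 ((1 / 2 : ℝ) • (outer ket00 + outer ket11)) = 1 / 2 := by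
  have hub : ∀ x ∈ { x : ℝ | ∃ U ∈ Matrix.unitaryGroup (Fin 2) ℂ,
      x = (star (tensorI U *ᵥ psiPlus 2) ⬝ᵥ
        (((1 / 2 : ℝ) • (outer ket00 + outer ket11)) *ᵥ (tensorI U *ᵥ psiPlus 2))).re },
      x ≤ 1 / 2 := by
    rintro x ⟨U, hU, rfl⟩
    rw [rho_val]
    have h0 := row_normSq hU 0
    have h1 := row_normSq hU 1
    nlinarith [Complex.normSq_nonneg (U 0 1), Complex.normSq_nonneg (U 1 0)]
  have hmem : (1 / 2 : ℝ) ∈ { x : ℝ | ∃ U ∈ Matrix.unitaryGroup (Fin 2) ℂ,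
      x = (star (tensorI U *ᵥ psiPlus 2) ⬝ᵥ
        (((1 / 2 : ℝ) • (outer ket00 + outer ket11)) *ᵥ (tensorI U *ᵥ psiPlus 2))).re } := by
    refine ⟨1, one_mem _, ?_⟩
    rw [rho_val]
    norm_num [Matrix.one_apply]
  exact le_antisymm (csSup_le ⟨_, hmem⟩ hub) (le_csSup ⟨1/2, hub⟩ hmem)

def phase (a : ℂ) : ℂ := if a = 0 then 1 else a / ‖a‖

lemma norm_phase (a : ℂ) : ‖phase a‖ = 1 := by
  unfold phase
  split_ifs with h
  · simp
  · rw [norm_div]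
    simp
    exact h

lemma conj_phase_mul (a : ℂ) : starRingEnd ℂ (phase a) * a = (‖a‖ : ℂ) := by
  unfold phase
  split_ifs with h
  · simp [h]
  · rw [map_div₀, Complex.conj_ofReal]
    rw [div_mul_eq_mul_div, mul_comm, Complex.mul_conj']
    have h' : (‖a‖:ℂ) ≠ 0 := Complex.ofReal_ne_zero.mpr (norm_ne_zero_iff.mpr h)
    rw [sq, mul_div_assoc, div_self h', mul_one]

lemma phase_conj_mul (a : ℂ) : phase a * starRingEnd ℂ (phase a) = 1 := by
  rw [Complex.mul_conj]
  norm_cast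
  rw [Complex.normSq_eq_norm_sq]
  simp [norm_phase]

def Udiag (a b : ℂ) : Matrix (Fin 2) (Fin 2) ℂ := !![phase a, 0; 0, phase b]

lemma Udiag_mem (a b : ℂ) : Udiag a b ∈ Matrix.unitaryGroup (Fin 2) ℂ := by
  constructor <;>
  · ext i j
    fin_cases i <;> fin_cases j <;>
      simp [Udiag, Matrix.mul_apply, Fin.sum_univ_two, Matrix.one_apply,
        Matrix.conjTranspose_apply, phase_conj_mul, mul_comm]

lemma bdd_pure (ψ : Fin 2 × Fin 2 → ℂ) (hψ : ∑ q, ‖ψ q‖ ^ 2 = 1) :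
    ∀ x ∈ { x : ℝ | ∃ U ∈ Matrix.unitaryGroup (Fin 2) ℂ,
      x = (star (tensorI U *ᵥ psiPlus 2) ⬝ᵥ
        (outer ψ *ᵥ (tensorI U *ᵥ psiPlus 2))).re }, x ≤ 8 := by
  rintro x ⟨U, hU, rfl⟩
  rw [pure_val]
  have hψle : ∀ q, ‖ψ q‖ ≤ 1 := by
    intro q
    have h1 : ‖ψ q‖ ^ 2 ≤ 1 := by
      rw [← hψ]
      exact Finset.single_le_sum (fun i _ => sq_nonneg ‖ψ i‖) (Finset.mem_univ q)
    nlinarith [norm_nonneg (ψ q)]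
  have hUle : ∀ i j, ‖U i j‖ ≤ 1 := by
    intro i j
    have h := row_normSq hU i
    have n0 := Complex.normSq_nonneg (U i 0)
    have n1 := Complex.normSq_nonneg (U i 1)
    have h2 : Complex.normSq (U i j) ≤ 1 := by
      fin_cases j
      · show Complex.normSq (U i 0) ≤ 1; linarith
      · show Complex.normSq (U i 1) ≤ 1; linarith
    have h3 : ‖U i j‖ ^ 2 ≤ 1 := by
      rw [Complex.sq_norm]; exact h2
    nlinarith [norm_nonneg (U i j)]
  set z := starRingEnd ℂ (U 0 0) * ψ (0,0) + starRingEnd ℂ (U 0 1) * ψ (0,1)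
      + starRingEnd ℂ (U 1 0) * ψ (1,0) + starRingEnd ℂ (U 1 1) * ψ (1,1) with hz
  have hzle : ‖z‖ ≤ 4 := by
    have : ∀ (i j : Fin 2) (q : Fin 2 × Fin 2), ‖starRingEnd ℂ (U i j) * ψ q‖ ≤ 1 := by
      intro i j q
      rw [norm_mul, RCLike.norm_conj]
      calc ‖U i j‖ * ‖ψ q‖ ≤ 1 * 1 :=
        mul_le_mul (hUle i j) (hψle q) (norm_nonneg _) zero_le_one
      _ = 1 := by ring
    calc ‖z‖ ≤ ‖starRingEnd ℂ (U 0 0) * ψ (0,0)‖ + ‖starRingEnd ℂ (U 0 1) * ψ (0,1)‖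
        + ‖starRingEnd ℂ (U 1 0) * ψ (1,0)‖ + ‖starRingEnd ℂ (U 1 1) * ψ (1,1)‖ := by
          rw [hz]
          exact le_trans (norm_add_le _ _) (by
            gcongr <;> exact le_trans (norm_add_le _ _) (by gcongr; exact norm_add_le _ _))
      _ ≤ 4 := by
          have h1 := this 0 0 (0,0); have h2 := this 0 1 (0,1)
          have h3 := this 1 0 (1,0); have h4 := this 1 1 (1,1)
          linarith
  have : Complex.normSq z ≤ 16 := by
    rw [Complex.normSq_eq_norm_sq]
    nlinarith [norm_nonneg z, hzle]
  linarith

lemma fef_pure_ge (ψ : Fin 2 × Fin 2 → ℂ) (hψ : ∑ q, ‖ψ q‖ ^ 2 = 1)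
    (h01 : ψ (0,1) = 0) (h10 : ψ (1,0) = 0) :
    (‖ψ (0,0)‖ + ‖ψ (1,1)‖) ^ 2 / 2 ≤ fef 2 (outer ψ) := by
  apply le_csSup ⟨8, fun x hx => bdd_pure ψ hψ x hx⟩
  refine ⟨Udiag (ψ (0,0)) (ψ (1,1)), Udiag_mem _ _, ?_⟩
  rw [pure_val]
  have e00 : Udiag (ψ (0,0)) (ψ (1,1)) 0 0 = phase (ψ (0,0)) := by simp [Udiag]
  have e01 : Udiag (ψ (0,0)) (ψ (1,1)) 0 1 = 0 := by simp [Udiag]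
  have e10 : Udiag (ψ (0,0)) (ψ (1,1)) 1 0 = 0 := by simp [Udiag]
  have e11 : Udiag (ψ (0,0)) (ψ (1,1)) 1 1 = phase (ψ (1,1)) := by simp [Udiag]
  rw [e00, e01, e10, e11, h01, h10]
  simp only [map_zero, mul_zero, zero_mul, add_zero, zero_add]
  rw [conj_phase_mul, conj_phase_mul]
  rw [← Complex.ofReal_add, Complex.normSq_ofReal]
  ring

lemma support_zero {n : ℕ} (p : Fin n → ℝ) (ψ : Fin n → (Fin 2 × Fin 2 → ℂ))
    (hp : ∀ i, 0 ≤ p i)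
    (hd : (1 / 2 : ℝ) • (outer ket00 + outer ket11) = ∑ i, p i • outer (ψ i))
    (q : Fin 2 × Fin 2) (hq1 : ket00 q = 0) (hq2 : ket11 q = 0) :
    ∀ i, p i ≠ 0 → ψ i q = 0 := by
  have h := congrFun (congrFun hd q) q
  have hL : ((1 / 2 : ℝ) • (outer ket00 + outer ket11)) q q = 0 := by
    simp [Matrix.smul_apply, Matrix.add_apply, outer, Matrix.vecMulVec_apply, hq1, hq2]
  have hR : (∑ i, p i • outer (ψ i)) q q = ∑ i, (p i : ℂ) * (ψ i q * starRingEnd ℂ (ψ i q)) := by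
    rw [Matrix.sum_apply]
    exact Finset.sum_congr rfl fun i _ => by
      simp [Matrix.smul_apply, outer, Matrix.vecMulVec_apply, Complex.real_smul]
  rw [hL, hR] at h
  have h2 : (0:ℝ) = ∑ i, p i * Complex.normSq (ψ i q) := by
    have := congrArg Complex.re h
    simpa [Complex.re_sum, Complex.mul_conj] using this
  have h3 := (Finset.sum_eq_zero_iff_of_nonneg (fun i _ =>
    mul_nonneg (hp i) (Complex.normSq_nonneg _))).mp h2.symm
  intro i hi
  have := h3 i (Finset.mem_univ i)
  have hn : Complex.normSq (ψ i q) = 0 := by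
    rcases mul_eq_zero.mp this with h | h
    · exact absurd h hi
    · exact h
  exact Complex.normSq_eq_zero.mp hn

lemma fef_pure_half {ψ : Fin 2 × Fin 2 → ℂ} (hψ : ∑ q, ‖ψ q‖ ^ 2 = 1)
    (h01 : ψ (0,1) = 0) (h10 : ψ (1,0) = 0) :
    1 / 2 + ‖ψ (0,0)‖ * ‖ψ (1,1)‖ ≤ fef 2 (outer ψ) := by
  have hn : ‖ψ (0,0)‖ ^ 2 + ‖ψ (1,1)‖ ^ 2 = 1 := by
    have := hψ
    rw [Fintype.sum_prod_type, Fin.sum_univ_two, Fin.sum_univ_two, Fin.sum_univ_two] at this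
    simpa [h01, h10] using this
  have h := fef_pure_ge ψ hψ h01 h10
  nlinarith [h]

/-- FEF is not the convex roof of pure-state FEF: for
`ρ = ½(|00⟩⟨00| + |11⟩⟨11|)` one has `F(ρ) = ½`, yet every pure-state
decomposition satisfies `∑ᵢ pᵢ F(|ψᵢ⟩) ≥ ½`, strictly unless it is the
eigendecomposition. -/
theorem fef_not_convex_roof :
    fef 2 ((1 / 2 : ℝ) • (outer ket00 + outer ket11)) = 1 / 2 ∧
    ∀ (n : ℕ) (p : Fin n → ℝ) (ψ : Fin n → (Fin 2 × Fin 2 → ℂ)),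
      (∀ i, 0 ≤ p i) → (∑ i, p i = 1) → (∀ i, ∑ q, ‖ψ i q‖ ^ 2 = 1) →
      ((1 / 2 : ℝ) • (outer ket00 + outer ket11) = ∑ i, p i • outer (ψ i)) →
      (1 / 2 ≤ ∑ i, p i * fef 2 (outer (ψ i))) ∧
      ((∃ i, p i ≠ 0 ∧ ∀ c : ℂ, ψ i ≠ c • ket00 ∧ ψ i ≠ c • ket11) →
        1 / 2 < ∑ i, p i * fef 2 (outer (ψ i))) := by
  refine ⟨fef_rho, ?_⟩
  intro n p ψ hp hsum hnorm hd
  have h01 := support_zero p ψ hp hd (0,1) (by simp [ket00]) (by simp [ket11])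
  have h10 := support_zero p ψ hp hd (1,0) (by simp [ket00]) (by simp [ket11])
  have key : ∀ i, p i * (1/2) ≤ p i * fef 2 (outer (ψ i)) := by
    intro i
    by_cases hpi : p i = 0
    · simp [hpi]
    · have h := fef_pure_half (hnorm i) (h01 i hpi) (h10 i hpi)
      have hab : 0 ≤ ‖ψ i (0,0)‖ * ‖ψ i (1,1)‖ := by positivity
      exact mul_le_mul_of_nonneg_left (by linarith) (hp i)
  have base : (1/2 : ℝ) = ∑ i, p i * (1/2) := by
    rw [← Finset.sum_mul, hsum]; ring
  constructor
  · rw [base]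
    exact Finset.sum_le_sum fun i _ => key i
  · rintro ⟨i₀, hpi₀, hc⟩
    have hz01 := h01 i₀ hpi₀
    have hz10 := h10 i₀ hpi₀
    have hα : ψ i₀ (0,0) ≠ 0 := by
      intro h0
      apply (hc (ψ i₀ (1,1))).2
      funext q
      fin_cases q <;> simp [ket11, ← Prod.mk_zero_zero, ← Prod.mk_one_one, h0, hz01, hz10]
    have hβ : ψ i₀ (1,1) ≠ 0 := by
      intro h0
      apply (hc (ψ i₀ (0,0))).1
      funext q
      fin_cases q <;> simp [ket00, ← Prod.mk_zero_zero, ← Prod.mk_one_one, h0, hz01, hz10]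
    have strict : p i₀ * (1/2) < p i₀ * fef 2 (outer (ψ i₀)) := by
      have h := fef_pure_half (hnorm i₀) hz01 hz10
      have hab : 0 < ‖ψ i₀ (0,0)‖ * ‖ψ i₀ (1,1)‖ :=
        mul_pos (norm_pos_iff.mpr hα) (norm_pos_iff.mpr hβ)
      have hpp : 0 < p i₀ := lt_of_le_of_ne (hp i₀) (Ne.symm hpi₀)
      exact mul_lt_mul_of_pos_left (by linarith) hpp
    rw [base]
    exact Finset.sum_lt_sum (fun i _ => key i) ⟨i₀, Finset.mem_univ _, strict⟩
end
end

section
/- For a normalized superposition |ψ⟩ = (1/γ)(α₁|φ₁⟩ + ... + α_m|φ_m⟩) of pure states in C^d ⊗ C^d, the FEF satisfies max_i { |α_i|F^{1/2}(|φ_i⟩) − Σ_{j≠i}|α_j|F^{1/2}(|φ_j⟩) } ≤ |γ|F^{1/2}(|ψ⟩) ≤ Σ_i |α_i|F^{1/2}(|φ_i⟩). -/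
open Matrix Complex BigOperators Finset

noncomputable section

namespace FefAux

lemma v_apply {d : ℕ} (U : Matrix (Fin d) (Fin d) ℂ) (p : Fin d × Fin d) :
    (tensorI U *ᵥ psiPlus d) p = U p.1 p.2 * ((1 / Real.sqrt d : ℝ) : ℂ) := by
  unfold tensorI psiPlus mulVec dotProduct
  rw [Fintype.sum_prod_type]
  simp [mul_ite, ite_and]

lemma norm_v {d : ℕ} (hd : 0 < d) {U : Matrix (Fin d) (Fin d) ℂ}
    (hU : U ∈ Matrix.unitaryGroup (Fin d) ℂ) :
    ∑ p, ‖(tensorI U *ᵥ psiPlus d) p‖ ^ 2 = 1 := by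
  have hUU : U * star U = 1 := hU.2
  have hrow : ∀ i : Fin d, ∑ j, ‖U i j‖ ^ 2 = 1 := by
    intro i
    have := congrArg (fun M => (M i i).re) hUU
    simp only [Matrix.mul_apply, Matrix.star_apply, Matrix.one_apply, if_pos rfl,
      Complex.mul_conj] at this
    simp only [Complex.re_sum, Complex.ofReal_re] at this
    simpa [Complex.sq_norm, Complex.normSq_apply] using this
  calc ∑ p : Fin d × Fin d, ‖(tensorI U *ᵥ psiPlus d) p‖ ^ 2
      = ∑ p : Fin d × Fin d, ‖U p.1 p.2‖ ^ 2 * (1 / d) := by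
        refine Finset.sum_congr rfl fun p _ => ?_
        rw [v_apply]
        rw [norm_mul, mul_pow]
        congr 1
        rw [Complex.norm_real]
        rw [Real.norm_eq_abs, _root_.abs_of_nonneg (by positivity), div_pow, one_pow,
          Real.sq_sqrt (Nat.cast_nonneg d)]
    _ = 1 := by
        rw [← Finset.sum_mul, Fintype.sum_prod_type]
        simp only [hrow]
        simp
        field_simp

lemma quad {n : Type*} [Fintype n] (φ w : n → ℂ) :
    (star w ⬝ᵥ (outer φ *ᵥ w)).re = ‖star w ⬝ᵥ φ‖ ^ 2 := by
  have key : star w ⬝ᵥ (outer φ *ᵥ w) = (star w ⬝ᵥ φ) * (star φ ⬝ᵥ w) := by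
    simp only [outer, dotProduct, Matrix.vecMulVec_apply, Matrix.mulVec,
      dotProduct, Matrix.star_apply, Pi.star_apply]
    rw [Finset.sum_mul_sum]
    refine Finset.sum_congr rfl fun p _ => ?_
    rw [Finset.mul_sum]
    refine Finset.sum_congr rfl fun q _ => ?_
    ring
  have h1 : star φ ⬝ᵥ w = starRingEnd ℂ (star w ⬝ᵥ φ) := by
    simp [dotProduct, map_sum, mul_comm]
  rw [key, h1, Complex.mul_conj]
  simp [Complex.normSq_eq_norm_sq, ← Complex.ofReal_pow]

lemma cs {n : Type*} [Fintype n] (w φ : n → ℂ) :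
    ‖star w ⬝ᵥ φ‖ ≤ Real.sqrt (∑ i, ‖w i‖ ^ 2) * Real.sqrt (∑ i, ‖φ i‖ ^ 2) := by
  have h := @norm_inner_le_norm ℂ (EuclideanSpace ℂ n) _ _ _
    ((WithLp.equiv 2 (n → ℂ)).symm w) ((WithLp.equiv 2 (n → ℂ)).symm φ)
  simpa [EuclideanSpace.norm_eq, PiLp.inner_apply, dotProduct, Matrix.star_apply,
    RCLike.inner_apply, Pi.star_apply, RCLike.star_def, mul_comm] using h

variable {d : ℕ}

/-- The defining set of `fef`. -/
def S (d : ℕ) (χ : Fin d × Fin d → ℂ) : Set ℝ :=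
  { x : ℝ | ∃ U ∈ Matrix.unitaryGroup (Fin d) ℂ,
    x = (star (tensorI U *ᵥ psiPlus d) ⬝ᵥ (outer χ *ᵥ (tensorI U *ᵥ psiPlus d))).re }

lemma fef_eq (χ : Fin d × Fin d → ℂ) : fef d (outer χ) = sSup (S d χ) := rfl

lemma mem_S {U : Matrix (Fin d) (Fin d) ℂ} (hU : U ∈ Matrix.unitaryGroup (Fin d) ℂ)
    (χ : Fin d × Fin d → ℂ) :
    ‖star (tensorI U *ᵥ psiPlus d) ⬝ᵥ χ‖ ^ 2 ∈ S d χ :=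
  ⟨U, hU, (quad χ _).symm⟩

lemma S_nonempty (hd : 0 < d) (χ : Fin d × Fin d → ℂ) : (S d χ).Nonempty :=
  ⟨_, mem_S (one_mem _) χ⟩

lemma S_le_one (hd : 0 < d) {χ : Fin d × Fin d → ℂ} (hχ : ∑ q, ‖χ q‖ ^ 2 = 1) :
    ∀ x ∈ S d χ, x ≤ 1 := by
  rintro x ⟨U, hU, rfl⟩
  rw [quad]
  have h := cs (tensorI U *ᵥ psiPlus d) χ
  rw [norm_v hd hU, hχ, Real.sqrt_one, mul_one] at h
  calc ‖star (tensorI U *ᵥ psiPlus d) ⬝ᵥ χ‖ ^ 2 ≤ 1 ^ 2 :=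
        pow_le_pow_left₀ (norm_nonneg _) h 2
    _ = 1 := one_pow 2

lemma bddAbove_S (hd : 0 < d) {χ : Fin d × Fin d → ℂ} (hχ : ∑ q, ‖χ q‖ ^ 2 = 1) :
    BddAbove (S d χ) := ⟨1, fun x hx => S_le_one hd hχ x hx⟩

lemma g_le_sqrt (hd : 0 < d) {U : Matrix (Fin d) (Fin d) ℂ}
    (hU : U ∈ Matrix.unitaryGroup (Fin d) ℂ) {χ : Fin d × Fin d → ℂ}
    (hχ : ∑ q, ‖χ q‖ ^ 2 = 1) :
    ‖star (tensorI U *ᵥ psiPlus d) ⬝ᵥ χ‖ ≤ Real.sqrt (fef d (outer χ)) := by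
  have h2 : ‖star (tensorI U *ᵥ psiPlus d) ⬝ᵥ χ‖ ^ 2 ≤ fef d (outer χ) :=
    le_csSup (bddAbove_S hd hχ) (mem_S hU χ)
  calc ‖star (tensorI U *ᵥ psiPlus d) ⬝ᵥ χ‖
      = Real.sqrt (‖star (tensorI U *ᵥ psiPlus d) ⬝ᵥ χ‖ ^ 2) :=
        (Real.sqrt_sq (norm_nonneg _)).symm
    _ ≤ Real.sqrt (fef d (outer χ)) := Real.sqrt_le_sqrt h2

/-- Key abstraction: if `‖a‖·‖g U χ‖ ≤ c` for every unitary `U`, then `‖a‖·√F(χ) ≤ c`. -/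
lemma abs_mul_sqrt_fef_le (hd : 0 < d) {χ : Fin d × Fin d → ℂ}
    (hχ : ∑ q, ‖χ q‖ ^ 2 = 1) (a : ℂ) (c : ℝ) (hc : 0 ≤ c)
    (h : ∀ U ∈ Matrix.unitaryGroup (Fin d) ℂ,
      ‖a‖ * ‖star (tensorI U *ᵥ psiPlus d) ⬝ᵥ χ‖ ≤ c) :
    ‖a‖ * Real.sqrt (fef d (outer χ)) ≤ c := by
  rcases eq_or_ne a 0 with ha | ha
  · simpa [ha] using hc
  · have ha' : 0 < ‖a‖ := norm_pos_iff.mpr ha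
    have hsup : fef d (outer χ) ≤ (c / ‖a‖) ^ 2 := by
      rw [fef_eq]
      refine csSup_le (S_nonempty hd χ) ?_
      rintro x ⟨U, hU, rfl⟩
      rw [quad]
      have hg : ‖star (tensorI U *ᵥ psiPlus d) ⬝ᵥ χ‖ ≤ c / ‖a‖ := by
        rw [le_div_iff₀ ha', mul_comm]
        exact h U hU
      exact pow_le_pow_left₀ (norm_nonneg _) hg 2
    have hsq : Real.sqrt (fef d (outer χ)) ≤ c / ‖a‖ := by
      calc Real.sqrt (fef d (outer χ)) ≤ Real.sqrt ((c / ‖a‖) ^ 2) := Real.sqrt_le_sqrt hsup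
        _ = c / ‖a‖ := Real.sqrt_sq (div_nonneg hc ha'.le)
    calc ‖a‖ * Real.sqrt (fef d (outer χ)) ≤ ‖a‖ * (c / ‖a‖) :=
          mul_le_mul_of_nonneg_left hsq ha'.le
      _ = c := by rw [mul_comm, div_mul_cancel₀ _ ha'.ne']

end FefAux

open FefAux in
/-- FEF of a superposition of `m` pure states:
`maxᵢ{|αᵢ|√F(φᵢ) − ∑_{j≠i}|αⱼ|√F(φⱼ)} ≤ |γ|√F(ψ) ≤ ∑ᵢ|αᵢ|√F(φᵢ)`. -/
theorem fef_superposition_many (d : ℕ) (hd : 0 < d) (m : ℕ)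
    (φ : Fin m → (Fin d × Fin d → ℂ)) (α : Fin m → ℂ) (γ : ℂ)
    (ψ : Fin d × Fin d → ℂ)
    (hφ : ∀ i, ∑ q, ‖φ i q‖ ^ 2 = 1) (hψn : ∑ q, ‖ψ q‖ ^ 2 = 1)
    (hsum : γ • ψ = ∑ i, α i • φ i) :
    (∀ i, ‖α i‖ * Real.sqrt (fef d (outer (φ i))) -
        ∑ j ∈ Finset.univ \ {i}, ‖α j‖ * Real.sqrt (fef d (outer (φ j))) ≤
      ‖γ‖ * Real.sqrt (fef d (outer ψ))) ∧
    ‖γ‖ * Real.sqrt (fef d (outer ψ)) ≤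
      ∑ i, ‖α i‖ * Real.sqrt (fef d (outer (φ i))) := by
  -- linearity of the amplitude in the state
  have hlin : ∀ U : Matrix (Fin d) (Fin d) ℂ,
      γ * (star (tensorI U *ᵥ psiPlus d) ⬝ᵥ ψ) =
        ∑ i, α i * (star (tensorI U *ᵥ psiPlus d) ⬝ᵥ (φ i)) := by
    intro U
    set w := star (tensorI U *ᵥ psiPlus d) with hw
    have h1 : ∀ (c : ℂ) (χ : Fin d × Fin d → ℂ), w ⬝ᵥ (c • χ) = c * (w ⬝ᵥ χ) := by
      intro c χ
      simp [dotProduct, Finset.mul_sum, mul_left_comm]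
    have h2 : w ⬝ᵥ (∑ i, α i • φ i) = ∑ i, α i * (w ⬝ᵥ φ i) := by
      simp only [dotProduct, Finset.sum_apply, Pi.smul_apply, smul_eq_mul,
        Finset.mul_sum]
      rw [Finset.sum_comm]
      exact Finset.sum_congr rfl fun i _ => Finset.sum_congr rfl fun p _ => by ring
    rw [← h1, hsum, h2]
  have hs_nonneg : ∀ i, (0:ℝ) ≤ ‖α i‖ * Real.sqrt (fef d (outer (φ i))) :=
    fun i => mul_nonneg (norm_nonneg _) (Real.sqrt_nonneg _)
  have hγψ : ∀ U ∈ Matrix.unitaryGroup (Fin d) ℂ,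
      ‖γ‖ * ‖star (tensorI U *ᵥ psiPlus d) ⬝ᵥ ψ‖ ≤
        ‖γ‖ * Real.sqrt (fef d (outer ψ)) :=
    fun U hU => mul_le_mul_of_nonneg_left (g_le_sqrt hd hU hψn) (norm_nonneg _)
  constructor
  · intro i
    rw [sub_le_iff_le_add]
    set R := ‖γ‖ * Real.sqrt (fef d (outer ψ)) +
      ∑ j ∈ Finset.univ \ {i}, ‖α j‖ * Real.sqrt (fef d (outer (φ j))) with hR
    have hR0 : 0 ≤ R :=
      add_nonneg (mul_nonneg (norm_nonneg _) (Real.sqrt_nonneg _))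
        (Finset.sum_nonneg fun j _ => hs_nonneg j)
    refine abs_mul_sqrt_fef_le hd (hφ i) (α i) R hR0 ?_
    intro U hU
    set w := star (tensorI U *ᵥ psiPlus d) with hw
    have htot := hlin U
    rw [← hw] at htot
    rw [Finset.sum_eq_sum_sdiff_singleton_add (Finset.mem_univ i)
      (fun j => α j * (w ⬝ᵥ φ j))] at htot
    have hsplit : α i * (w ⬝ᵥ φ i) =
        γ * (w ⬝ᵥ ψ) - ∑ j ∈ Finset.univ \ {i}, α j * (w ⬝ᵥ φ j) := by
      rw [htot]; ring
    calc ‖α i‖ * ‖w ⬝ᵥ φ i‖ = ‖α i * (w ⬝ᵥ φ i)‖ := (norm_mul _ _).symm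
      _ = ‖γ * (w ⬝ᵥ ψ) - ∑ j ∈ Finset.univ \ {i}, α j * (w ⬝ᵥ φ j)‖ := by rw [hsplit]
      _ ≤ ‖γ * (w ⬝ᵥ ψ)‖ + ‖∑ j ∈ Finset.univ \ {i}, α j * (w ⬝ᵥ φ j)‖ := norm_sub_le _ _
      _ ≤ ‖γ‖ * Real.sqrt (fef d (outer ψ)) +
            ∑ j ∈ Finset.univ \ {i}, ‖α j‖ * Real.sqrt (fef d (outer (φ j))) := by
          gcongr
          · calc ‖γ * (w ⬝ᵥ ψ)‖ = ‖γ‖ * ‖w ⬝ᵥ ψ‖ := norm_mul _ _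
              _ ≤ _ := hγψ U hU
          · calc ‖∑ j ∈ Finset.univ \ {i}, α j * (w ⬝ᵥ φ j)‖
                ≤ ∑ j ∈ Finset.univ \ {i}, ‖α j * (w ⬝ᵥ φ j)‖ := norm_sum_le _ _
              _ ≤ _ := by
                  refine Finset.sum_le_sum fun j _ => ?_
                  rw [norm_mul]
                  exact mul_le_mul_of_nonneg_left (g_le_sqrt hd hU (hφ j)) (norm_nonneg _)
  · have hT0 : 0 ≤ ∑ i, ‖α i‖ * Real.sqrt (fef d (outer (φ i))) :=
      Finset.sum_nonneg fun i _ => hs_nonneg i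
    refine abs_mul_sqrt_fef_le hd hψn γ _ hT0 ?_
    intro U hU
    set w := star (tensorI U *ᵥ psiPlus d) with hw
    calc ‖γ‖ * ‖w ⬝ᵥ ψ‖ = ‖γ * (w ⬝ᵥ ψ)‖ := (norm_mul _ _).symm
      _ = ‖∑ i, α i * (w ⬝ᵥ φ i)‖ := by rw [hlin U]
      _ ≤ ∑ i, ‖α i * (w ⬝ᵥ φ i)‖ := norm_sum_le _ _
      _ ≤ ∑ i, ‖α i‖ * Real.sqrt (fef d (outer (φ i))) := by
          refine Finset.sum_le_sum fun i _ => ?_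
          rw [norm_mul]
          exact mul_le_mul_of_nonneg_left (g_le_sqrt hd hU (hφ i)) (norm_nonneg _)
end
end

section
/- The FEF of the isotropic state ρ_iso(f) = ((1−f)/(d²−1)) I + ((d²f−1)/(d²−1)) |ψ⁺⟩⟨ψ⁺| on C^d ⊗ C^d equals f when 1/d² ≤ f ≤ 1, and equals (1−f)/(d²−1) when 0 ≤ f < 1/d². -/
open Matrix Complex BigOperators Finset

noncomputable section

/-- The isotropic state on `ℂ^d ⊗ ℂ^d`. -/
def isotropic (d : ℕ) (f : ℝ) : Matrix (Fin d × Fin d) (Fin d × Fin d) ℂ :=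
  ((1 - f) / ((d : ℝ) ^ 2 - 1)) • (1 : Matrix (Fin d × Fin d) (Fin d × Fin d) ℂ) +
    (((d : ℝ) ^ 2 * f - 1) / ((d : ℝ) ^ 2 - 1)) • outer (psiPlus d)

lemma vec_eq (d : ℕ) (U : Matrix (Fin d) (Fin d) ℂ) :
    tensorI U *ᵥ psiPlus d = fun p => U p.1 p.2 * ((1 / Real.sqrt d : ℝ) : ℂ) := by
  funext p
  simp [tensorI, psiPlus, mulVec, dotProduct, Fintype.sum_prod_type, mul_ite, ite_mul,
    Finset.sum_ite_eq, Finset.sum_ite_eq']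

-- norm of v = 1
lemma norm_v (d : ℕ) (hd : 2 ≤ d) (U : Matrix (Fin d) (Fin d) ℂ)
    (hU : U ∈ Matrix.unitaryGroup (Fin d) ℂ) :
    star (tensorI U *ᵥ psiPlus d) ⬝ᵥ (tensorI U *ᵥ psiPlus d) = 1 := by
  have hd0 : (0:ℝ) < d := by positivity
  have hsq : ((1 / Real.sqrt d : ℝ) : ℂ) * ((1 / Real.sqrt d : ℝ) : ℂ) = (1/(d:ℂ)) := by
    rw [← Complex.ofReal_mul]
    rw [show (1 / Real.sqrt d) * (1 / Real.sqrt d) = 1 / d by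
      rw [div_mul_div_comm, one_mul, Real.mul_self_sqrt hd0.le]]
    push_cast; ring
  have h1 : star U * U = 1 := hU.1
  have htr : Matrix.trace (star U * U) = (d : ℂ) := by
    rw [h1]; simp
  rw [vec_eq]
  simp only [dotProduct, Pi.star_apply, star_mul', Fintype.sum_prod_type]
  have : ∀ i j : Fin d, (star (U i j) * star (((1 / Real.sqrt d : ℝ) : ℂ))) * (U i j * ((1 / Real.sqrt d : ℝ) : ℂ)) = star (U i j) * U i j * (1/(d:ℂ)) := by
    intro i j
    have : star (((1 / Real.sqrt d : ℝ) : ℂ)) = (((1 / Real.sqrt d : ℝ) : ℂ)) := by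
      simp [Complex.star_def, Complex.conj_ofReal]
    rw [this]; rw [← hsq]; ring
  simp only [this, ← Finset.sum_mul]
  have hdne : (d:ℂ) ≠ 0 := Nat.cast_ne_zero.mpr (by omega)
  have h2 : ∑ i : Fin d, ∑ j : Fin d, star (U i j) * U i j = (d : ℂ) := by
    rw [← htr, Matrix.trace]
    simp only [Matrix.diag, Matrix.mul_apply, Matrix.star_apply]
    rw [Finset.sum_comm]
  rw [h2]
  field_simp


lemma outer_mulVec {n : Type*} [Fintype n] (ψ v : n → ℂ) :
    outer ψ *ᵥ v = (star ψ ⬝ᵥ v) • ψ := by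
  funext p
  simp only [outer, Matrix.mulVec, Matrix.vecMulVec_apply, dotProduct, Pi.smul_apply,
    smul_eq_mul, Finset.sum_mul]
  exact Finset.sum_congr rfl fun q _ => by ring

lemma overlap (d : ℕ) (hd : 2 ≤ d) (U : Matrix (Fin d) (Fin d) ℂ) :
    star (psiPlus d) ⬝ᵥ (tensorI U *ᵥ psiPlus d) = Matrix.trace U / d := by
  have hd0 : (0:ℝ) < d := by positivity
  have hsq : ((1 / Real.sqrt d : ℝ) : ℂ) * ((1 / Real.sqrt d : ℝ) : ℂ) = (1/(d:ℂ)) := by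
    rw [← Complex.ofReal_mul]
    rw [show (1 / Real.sqrt d) * (1 / Real.sqrt d) = 1 / d by
      rw [div_mul_div_comm, one_mul, Real.mul_self_sqrt hd0.le]]
    push_cast; ring
  rw [vec_eq]
  simp only [dotProduct, Pi.star_apply, psiPlus, Fintype.sum_prod_type, Complex.star_def,
    apply_ite (starRingEnd ℂ), map_zero, Complex.conj_ofReal, ite_mul, zero_mul,
    Finset.sum_ite_eq, Finset.sum_ite_eq', Finset.mem_univ, if_true, Matrix.trace, Matrix.diag]
  rw [Finset.sum_congr rfl (fun k _ => show ((1 / Real.sqrt d : ℝ) : ℂ) * (U k k * ((1 / Real.sqrt d : ℝ) : ℂ)) = U k k * (1/(d:ℂ)) by rw [← hsq]; ring)]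
  rw [← Finset.sum_mul]
  ring

lemma value_eq (d : ℕ) (hd : 2 ≤ d) (f : ℝ) (U : Matrix (Fin d) (Fin d) ℂ)
    (hU : U ∈ Matrix.unitaryGroup (Fin d) ℂ) :
    (star (tensorI U *ᵥ psiPlus d) ⬝ᵥ (isotropic d f *ᵥ (tensorI U *ᵥ psiPlus d))).re
      = (1 - f) / ((d:ℝ)^2 - 1)
        + ((d:ℝ)^2 * f - 1) / ((d:ℝ)^2 - 1) * (Complex.normSq (Matrix.trace U) / (d:ℝ)^2) := by
  set v := tensorI U *ᵥ psiPlus d with hv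
  have h1 : isotropic d f *ᵥ v
      = (((1 - f) / ((d:ℝ)^2 - 1) : ℝ) : ℂ) • v
        + ((((d:ℝ)^2 * f - 1) / ((d:ℝ)^2 - 1) : ℝ) : ℂ) • ((star (psiPlus d) ⬝ᵥ v) • psiPlus d) := by
    rw [isotropic, Matrix.add_mulVec, Matrix.smul_mulVec, Matrix.smul_mulVec,
      Matrix.one_mulVec, outer_mulVec]
    funext p
    simp only [Pi.add_apply, Pi.smul_apply, smul_eq_mul, Complex.real_smul]
    try push_cast
    try ring
  rw [h1, dotProduct_add, dotProduct_smul, dotProduct_smul, norm_v d hd U hU, dotProduct_smul]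
  have h2 : star v ⬝ᵥ psiPlus d = star (star (psiPlus d) ⬝ᵥ v) := by
    simp [dotProduct, Finset.mul_sum, mul_comm]
  rw [h2, overlap d hd U]
  have hnsd : Complex.normSq ((d:ℕ) : ℂ) = (d:ℝ)^2 := by
    rw [Complex.normSq_apply]
    simp
    ring
  have h3 : Matrix.trace U / (d:ℂ) * star (Matrix.trace U / (d:ℂ))
      = ((Complex.normSq (Matrix.trace U) / (d:ℝ)^2 : ℝ) : ℂ) := by
    rw [show (star (Matrix.trace U / (d:ℂ))) = (starRingEnd ℂ) (Matrix.trace U / (d:ℂ)) from rfl,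
      Complex.mul_conj, Complex.normSq_div, hnsd]
  rw [smul_eq_mul, smul_eq_mul, smul_eq_mul, mul_one,
    h3, ← Complex.ofReal_mul, ← Complex.ofReal_add,
    Complex.ofReal_re]

lemma normSq_trace_le (d : ℕ) (U : Matrix (Fin d) (Fin d) ℂ)
    (hU : U ∈ Matrix.unitaryGroup (Fin d) ℂ) :
    Complex.normSq (Matrix.trace U) ≤ (d:ℝ)^2 := by
  have h1 : star U * U = 1 := hU.1
  have hcol : ∀ j, ∑ i, Complex.normSq (U i j) = 1 := by
    intro j
    have h2 : (star U * U) j j = 1 := by rw [h1]; simp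
    rw [Matrix.mul_apply] at h2
    have h3 : ∑ i, ((Complex.normSq (U i j) : ℝ) : ℂ) = 1 := by
      rw [← h2]
      exact Finset.sum_congr rfl fun i _ => by
        rw [Matrix.star_apply, Complex.normSq_eq_conj_mul_self]; rfl
    have := congrArg Complex.re h3
    simpa [Complex.re_sum] using this
  have hentry : ∀ i j, ‖U i j‖ ≤ 1 := by
    intro i j
    have h4 : Complex.normSq (U i j) ≤ 1 := by
      rw [← hcol j]
      exact Finset.single_le_sum (f := fun i => Complex.normSq (U i j))
        (fun i _ => Complex.normSq_nonneg _) (Finset.mem_univ i)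
    rw [← Complex.sq_norm] at h4
    nlinarith [norm_nonneg (U i j)]
  have htr : ‖Matrix.trace U‖ ≤ d := by
    rw [Matrix.trace]
    calc ‖∑ k, Matrix.diag U k‖ ≤ ∑ k, ‖Matrix.diag U k‖ := by
          exact norm_sum_le Finset.univ (Matrix.diag U)
      _ ≤ ∑ _k : Fin d, (1:ℝ) := Finset.sum_le_sum fun k _ => hentry k k
      _ = d := by simp
  rw [← Complex.sq_norm]
  nlinarith [norm_nonneg (Matrix.trace U)]

lemma exists_traceless (d : ℕ) (hd : 2 ≤ d) :
    ∃ U ∈ Matrix.unitaryGroup (Fin d) ℂ, Matrix.trace U = 0 := by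
  set ζ : ℂ := Complex.exp (2 * Real.pi * Complex.I / d) with hζdef
  have hζ : IsPrimitiveRoot ζ d := Complex.isPrimitiveRoot_exp d (by omega)
  have habs : ∀ k : ℕ, (starRingEnd ℂ) ζ ^ k * ζ ^ k = 1 := by
    intro k
    rw [← map_pow, ← Complex.normSq_eq_conj_mul_self]
    have : ‖ζ‖ = 1 := by
      rw [hζdef]
      rw [show (2 * Real.pi * Complex.I / d) = ((2 * Real.pi / d : ℝ) : ℂ) * Complex.I by
        push_cast; ring]
      exact Complex.norm_exp_ofReal_mul_I _
    rw [map_pow, show Complex.normSq ζ = 1 by rw [← Complex.sq_norm, this]; norm_num]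
    simp
  refine ⟨Matrix.diagonal (fun k : Fin d => ζ ^ (k : ℕ)), ?_, ?_⟩
  · constructor
    · show star _ * _ = 1
      rw [Matrix.star_eq_conjTranspose, Matrix.diagonal_conjTranspose,
        Matrix.diagonal_mul_diagonal]
      ext i j
      by_cases hij : i = j <;>
        simp [hij, Matrix.one_apply, Complex.star_def, habs]
    · show _ * star _ = 1
      rw [Matrix.star_eq_conjTranspose, Matrix.diagonal_conjTranspose,
        Matrix.diagonal_mul_diagonal]
      ext i j
      by_cases hij : i = j <;>
        simp [hij, Matrix.one_apply, Complex.star_def,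
          fun k => (mul_comm ((starRingEnd ℂ) ζ ^ k) (ζ ^ k)) ▸ habs k]
  · rw [Matrix.trace_diagonal]
    rw [Fin.sum_univ_eq_sum_range (fun k => ζ ^ k)]
    exact hζ.geom_sum_eq_zero (by omega)

/-- FEF of the isotropic state: `f` for `1/d² ≤ f ≤ 1`, and
`(1−f)/(d²−1)` for `0 ≤ f < 1/d²`. -/
theorem fef_isotropic (d : ℕ) (hd : 2 ≤ d) (f : ℝ) :
    (1 / (d : ℝ) ^ 2 ≤ f → f ≤ 1 → fef d (isotropic d f) = f) ∧
    (0 ≤ f → f < 1 / (d : ℝ) ^ 2 →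
      fef d (isotropic d f) = (1 - f) / ((d : ℝ) ^ 2 - 1)) := by
  have hd' : (2:ℝ) ≤ (d:ℝ) := by exact_mod_cast hd
  have hden : (0:ℝ) < (d:ℝ)^2 - 1 := by nlinarith
  have hd2 : (0:ℝ) < (d:ℝ)^2 := by positivity
  set a := (1 - f) / ((d:ℝ)^2 - 1) with ha
  set b := ((d:ℝ)^2 * f - 1) / ((d:ℝ)^2 - 1) with hb
  have hab : a + b = f := by rw [ha, hb]; field_simp; ring
  set S := { x : ℝ | ∃ U ∈ Matrix.unitaryGroup (Fin d) ℂ,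
    x = (star (tensorI U *ᵥ psiPlus d) ⬝ᵥ
      (isotropic d f *ᵥ (tensorI U *ᵥ psiPlus d))).re } with hS
  have hfef : fef d (isotropic d f) = sSup S := rfl
  have hmem : ∀ x ∈ S, ∃ t : ℝ, 0 ≤ t ∧ t ≤ 1 ∧ x = a + b * t := by
    rintro x ⟨U, hU, rfl⟩
    refine ⟨Complex.normSq (Matrix.trace U) / (d:ℝ)^2,
      div_nonneg (Complex.normSq_nonneg _) hd2.le, ?_, ?_⟩
    · exact (div_le_one hd2).2 (normSq_trace_le d U hU)
    · rw [value_eq d hd f U hU]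
  obtain ⟨U0, hU0, htr0⟩ := exists_traceless d hd
  have haS : a ∈ S := ⟨U0, hU0, by rw [value_eq d hd f U0 hU0, htr0]; simp [ha]⟩
  have hfS : f ∈ S := by
    refine ⟨1, one_mem _, ?_⟩
    rw [value_eq d hd f 1 (one_mem _), Matrix.trace_one]
    have hnsd : Complex.normSq ((Fintype.card (Fin d) : ℂ)) = (d:ℝ)^2 := by
      simp [Complex.normSq_apply]
      ring
    rw [hnsd, div_self (ne_of_gt hd2), mul_one, hab]
  constructor
  · intro h1 h2
    have hb0 : 0 ≤ b := by
      rw [hb]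
      apply div_nonneg _ hden.le
      rw [div_le_iff₀ hd2] at h1
      nlinarith
    have hub : ∀ x ∈ S, x ≤ f := by
      intro x hx
      obtain ⟨t, ht0, ht1, rfl⟩ := hmem x hx
      nlinarith
    rw [hfef]
    exact le_antisymm (csSup_le ⟨f, hfS⟩ hub) (le_csSup ⟨f, hub⟩ hfS)
  · intro h1 h2
    have hb0 : b ≤ 0 := by
      rw [hb]
      apply div_nonpos_of_nonpos_of_nonneg _ hden.le
      rw [lt_div_iff₀ hd2] at h2
      nlinarith
    have hub : ∀ x ∈ S, x ≤ a := by
      intro x hx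
      obtain ⟨t, ht0, ht1, rfl⟩ := hmem x hx
      nlinarith
    rw [hfef]
    exact le_antisymm (csSup_le ⟨a, haS⟩ hub) (le_csSup ⟨a, hub⟩ haS)
end
end

section
/- For any d×d unitary matrix U with d odd, tr(U U*) ≥ −d + 2, where U* is the entrywise complex conjugate; consequently the FEF of the Werner state for d odd and −1 ≤ f < 1/d equals (d² − d²f + df + d − 2)/(d²(d²−1)). -/
open Matrix Complex BigOperators Finset

noncomputable section

/-- The swap operator `V = ∑_{ij} |ij⟩⟨ji|`. -/
def swapOp (d : ℕ) : Matrix (Fin d × Fin d) (Fin d × Fin d) ℂ :=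
  fun p q => if p.1 = q.2 ∧ p.2 = q.1 then 1 else 0

/-- The Werner state on `ℂ^d ⊗ ℂ^d`. -/
def werner (d : ℕ) (f : ℝ) : Matrix (Fin d × Fin d) (Fin d × Fin d) ℂ :=
  (((d : ℝ) - f) / ((d : ℝ) ^ 3 - d)) •
      (1 : Matrix (Fin d × Fin d) (Fin d × Fin d) ℂ) +
    (((d : ℝ) * f - 1) / ((d : ℝ) ^ 3 - d)) • swapOp d


namespace FefWernerAux


theorem skew_det_zero (d : ℕ) (hodd : Odd d) (B : Matrix (Fin d) (Fin d) ℂ) (hB : Bᵀ = -B) :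
    B.det = 0 := by
  have h1 : B.det = (-1 : ℂ) ^ d * B.det := by
    conv_lhs => rw [← Matrix.det_transpose, hB]
    rw [Matrix.det_neg]
    simp [Fintype.card_fin]
  rw [hodd.neg_one_pow] at h1
  have : (2 : ℂ) * B.det = 0 := by linear_combination h1
  simpa using this

-- eigenvector of UU* with eigenvalue 1
theorem exists_fixed (d : ℕ) (hodd : Odd d) (U : Matrix (Fin d) (Fin d) ℂ)
    (hU : U ∈ Matrix.unitaryGroup (Fin d) ℂ) :
    ∃ v : Fin d → ℂ, v ≠ 0 ∧ (U * U.map (starRingEnd ℂ)) *ᵥ v = v := by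
  set M := U * U.map (starRingEnd ℂ) with hM
  have hdet : (M - 1).det = 0 := by
    have hfac : M - 1 = U * (U.map (starRingEnd ℂ) - Uᴴ) := by
      rw [Matrix.mul_sub, hM]
      congr 1
      have h1 : U * Uᴴ = 1 := by
        have := hU.2  -- U * star U = 1
        simpa [Matrix.star_eq_conjTranspose] using this
      exact h1.symm
    have hskew : (U.map (starRingEnd ℂ) - Uᴴ)ᵀ = -(U.map (starRingEnd ℂ) - Uᴴ) := by
      ext i j
      simp [Matrix.conjTranspose_apply, Matrix.transpose_apply, Matrix.map_apply]
    rw [hfac, Matrix.det_mul, skew_det_zero d hodd _ hskew, mul_zero]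
  obtain ⟨v, hv, hMv⟩ := (Matrix.exists_mulVec_eq_zero_iff).2 hdet
  refine ⟨v, hv, ?_⟩
  have := hMv
  rw [Matrix.sub_mulVec, Matrix.one_mulVec, sub_eq_zero] at this
  exact this

theorem conj_mem_unitary (d : ℕ) (U : Matrix (Fin d) (Fin d) ℂ)
    (hU : U ∈ Matrix.unitaryGroup (Fin d) ℂ) :
    U.map (starRingEnd ℂ) ∈ Matrix.unitaryGroup (Fin d) ℂ := by
  rw [Matrix.mem_unitaryGroup_iff]
  have h1 : U * Uᴴ = 1 := by simpa [Matrix.star_eq_conjTranspose] using hU.2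
  have : ∀ i j, (U.map (starRingEnd ℂ) * star (U.map (starRingEnd ℂ))) i j
      = starRingEnd ℂ ((U * Uᴴ) i j) := by
    intro i j
    simp [Matrix.mul_apply, Matrix.conjTranspose_apply, Matrix.map_apply, map_sum]
  ext i j
  rw [this i j, h1]
  by_cases h : i = j <;> simp [h, Matrix.one_apply]

theorem trace_bound (d : ℕ) (hodd : Odd d) (U : Matrix (Fin d) (Fin d) ℂ)
    (hU : U ∈ Matrix.unitaryGroup (Fin d) ℂ) :
    -(d : ℝ) + 2 ≤ (Matrix.trace (U * U.map (starRingEnd ℂ))).re := by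
  set M := U * U.map (starRingEnd ℂ) with hMdef
  have hM : M ∈ Matrix.unitaryGroup (Fin d) ℂ := mul_mem hU (conj_mem_unitary d U hU)
  obtain ⟨v, hv, hMv⟩ := exists_fixed d hodd U hU
  set A := (1 : Matrix (Fin d) (Fin d) ℂ) + M with hAdef
  have hAv : Aᴴ *ᵥ v = fun i => 2 * v i := by
    have hMHv : Mᴴ *ᵥ v = v := by
      have h : Mᴴ * M = 1 := Matrix.mem_unitaryGroup_iff'.1 hM
      conv_lhs => rw [← hMv, Matrix.mulVec_mulVec, h, Matrix.one_mulVec]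
    have : Aᴴ = 1 + Mᴴ := by simp [hAdef]
    rw [this]
    ext i
    rw [Matrix.add_mulVec, Matrix.one_mulVec, hMHv]
    simp [two_mul]
  set N : ℝ := ∑ j, Complex.normSq (v j) with hNdef
  have hNpos : 0 < N := by
    obtain ⟨j, hj⟩ := Function.ne_iff.1 hv
    exact Finset.sum_pos' (fun i _ => Complex.normSq_nonneg _)
      ⟨j, Finset.mem_univ j, by simpa [Complex.normSq_pos] using hj⟩
  set F : ℝ := ∑ i, ∑ j, Complex.normSq (A i j) with hFdef
  have hFswap : F = ∑ i, ∑ j, Complex.normSq (A j i) := Finset.sum_comm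
  -- Cauchy-Schwarz per column
  have key : ∀ i, Complex.normSq ((Aᴴ *ᵥ v) i) ≤ (∑ j, Complex.normSq (A j i)) * N := by
    intro i
    have h1 : ‖(Aᴴ *ᵥ v) i‖ ≤ ∑ j, ‖A j i‖ * ‖v j‖ := by
      calc ‖(Aᴴ *ᵥ v) i‖ = ‖∑ j, (starRingEnd ℂ) (A j i) * v j‖ := by
            simp [Matrix.mulVec, dotProduct, Matrix.conjTranspose_apply]
        _ ≤ ∑ j, ‖(starRingEnd ℂ) (A j i) * v j‖ := norm_sum_le _ _
        _ = ∑ j, ‖A j i‖ * ‖v j‖ := by simp [norm_mul]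
    have h2 : (∑ j, ‖A j i‖ * ‖v j‖) ^ 2 ≤ (∑ j, ‖A j i‖ ^ 2) * (∑ j, ‖v j‖ ^ 2) :=
      Finset.sum_mul_sq_le_sq_mul_sq _ _ _
    have h3 : Complex.normSq ((Aᴴ *ᵥ v) i) = ‖(Aᴴ *ᵥ v) i‖ ^ 2 := (Complex.sq_norm _).symm
    have h4 : ‖(Aᴴ *ᵥ v) i‖ ^ 2 ≤ (∑ j, ‖A j i‖ * ‖v j‖) ^ 2 :=
      pow_le_pow_left₀ (norm_nonneg _) h1 2
    calc Complex.normSq ((Aᴴ *ᵥ v) i) ≤ (∑ j, ‖A j i‖ ^ 2) * (∑ j, ‖v j‖ ^ 2) := by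
          rw [h3]; exact h4.trans h2
      _ = (∑ j, Complex.normSq (A j i)) * N := by
          simp [hNdef, Complex.sq_norm]
  have hsum : (4 : ℝ) * N ≤ F * N := by
    have lhs : ∑ i, Complex.normSq ((Aᴴ *ᵥ v) i) = 4 * N := by
      rw [hAv, hNdef, Finset.mul_sum]
      congr 1; ext i
      rw [Complex.normSq_mul]
      norm_num [Complex.normSq_apply]
    calc (4:ℝ) * N = ∑ i, Complex.normSq ((Aᴴ *ᵥ v) i) := lhs.symm
      _ ≤ ∑ i, (∑ j, Complex.normSq (A j i)) * N := Finset.sum_le_sum fun i _ => key i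
      _ = (∑ i, ∑ j, Complex.normSq (A j i)) * N := by rw [Finset.sum_mul]
      _ = F * N := by rw [← hFswap]
  have hF4 : (4 : ℝ) ≤ F := le_of_mul_le_mul_right hsum hNpos
  -- F = 2d + 2 Re tr M
  have hFtr : F = 2 * d + 2 * (Matrix.trace M).re := by
    have hAA : A * Aᴴ = 1 + 1 + M + Mᴴ := by
      have h : M * star M = 1 := Matrix.mem_unitaryGroup_iff.1 hM
      have h' : M * Mᴴ = 1 := by rw [← Matrix.star_eq_conjTranspose]; exact h
      have hexp : A * Aᴴ = 1 + Mᴴ + M + M * Mᴴ := by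
        simp only [hAdef, Matrix.conjTranspose_add, Matrix.conjTranspose_one,
          Matrix.mul_add, Matrix.add_mul, Matrix.one_mul, Matrix.mul_one]
        abel
      rw [hexp, h']
      abel
    have htr : (Matrix.trace (A * Aᴴ)).re = 2 * d + 2 * (Matrix.trace M).re := by
      rw [hAA]
      simp [Matrix.trace_add, Matrix.trace_one, Matrix.trace_conjTranspose]
      ring
    have hFtrace : (Matrix.trace (A * Aᴴ)).re = F := by
      rw [Matrix.trace, Complex.re_sum, hFdef]
      congr 1; ext i
      rw [Matrix.diag_apply, Matrix.mul_apply, Complex.re_sum]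
      congr 1; ext j
      rw [Matrix.conjTranspose_apply]
      simp [Complex.star_def, Complex.mul_conj]
    rw [← hFtrace, htr]
  rw [hFtr] at hF4
  linarith


namespace FefAux

/-- pairing function: 0 ↦ 0, odd n ↦ n+1, even n>0 ↦ n−1 -/
def pf (n : ℕ) : ℕ := if n % 2 = 1 then n + 1 else n - 1

lemma pf_lt {d : ℕ} (hd : d % 2 = 1) {n : ℕ} (hn : n < d) : pf n < d := by
  unfold pf; split_ifs with a <;> omega

lemma pf_invol (n : ℕ) : pf (pf n) = n := by
  unfold pf; split_ifs with a b c <;> omega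

def eps (n : ℕ) : ℂ := if n % 2 = 1 then -1 else 1

lemma eps_mul_self (n : ℕ) : eps n * eps n = 1 := by
  unfold eps; split_ifs <;> norm_num

lemma eps_conj (n : ℕ) : (starRingEnd ℂ) (eps n) = eps n := by
  unfold eps; split_ifs <;> simp

lemma eps_pf (n : ℕ) (hn : n ≠ 0) : eps (pf n) * eps n = -1 := by
  unfold pf eps
  split_ifs with a b c <;> first | (exfalso; omega) | norm_num

variable (d : ℕ) (hd : Odd d)

def sigma (i : Fin d) : Fin d := ⟨pf i.val, pf_lt (Nat.odd_iff.mp hd) i.isLt⟩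

def U0 : Matrix (Fin d) (Fin d) ℂ :=
  fun i j => if i = sigma d hd j then eps j.val else 0

lemma sigma_invol (i : Fin d) : sigma d hd (sigma d hd i) = i :=
  Fin.ext (pf_invol i.val)

lemma sigma_inj : Function.Injective (sigma d hd) := by
  intro a b h
  have := congrArg (sigma d hd) h
  rwa [sigma_invol, sigma_invol] at this

lemma U0_mem : U0 d hd ∈ Matrix.unitaryGroup (Fin d) ℂ := by
  rw [Matrix.mem_unitaryGroup_iff']
  ext i j
  have h0 : (star (U0 d hd) * U0 d hd) i j
      = ∑ k, (starRingEnd ℂ) (U0 d hd k i) * U0 d hd k j := by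
    simp [Matrix.mul_apply, Matrix.star_eq_conjTranspose, Matrix.conjTranspose_apply]
  rw [h0]
  have hterm : ∀ k, (starRingEnd ℂ) (U0 d hd k i) * U0 d hd k j
      = if k = sigma d hd i then (if k = sigma d hd j then eps i.val * eps j.val else 0)
        else 0 := by
    intro k
    by_cases h1 : k = sigma d hd i
    · by_cases h2 : k = sigma d hd j
      · simp only [U0, if_pos h1, if_pos h2, eps_conj, mul_comm]
      · simp only [U0, if_pos h1, if_neg h2, mul_zero, if_neg h2]
    · simp only [U0, if_neg h1, map_zero, zero_mul, if_neg h1]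
  rw [Finset.sum_congr rfl (fun k _ => hterm k), Finset.sum_ite_eq' Finset.univ]
  simp only [Finset.mem_univ, if_true]
  by_cases h : i = j
  · subst h
    simp [eps_mul_self, Matrix.one_apply_eq]
  · have hs : sigma d hd i ≠ sigma d hd j := fun hc => h (sigma_inj d hd hc)
    simp [hs, Matrix.one_apply_ne h]

lemma U0_trace (hd0 : 0 < d) :
    Matrix.trace (U0 d hd * (U0 d hd).map (starRingEnd ℂ)) = 2 - d := by
  have hdiag : ∀ i : Fin d, (U0 d hd * (U0 d hd).map (starRingEnd ℂ)) i i
      = if i = (⟨0, hd0⟩ : Fin d) then 1 else -1 := by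
    intro i
    rw [Matrix.mul_apply]
    have hterm : ∀ k, U0 d hd i k * ((U0 d hd).map (starRingEnd ℂ)) k i
        = if k = sigma d hd i then eps (sigma d hd i).val * eps i.val else 0 := by
      intro k
      by_cases h1 : k = sigma d hd i
      · subst h1
        simp [U0, Matrix.map_apply, sigma_invol, eps_conj]
      · have h2 : ¬(i = sigma d hd k) := by
          intro hc
          exact h1 (by rw [hc, sigma_invol])
        simp [U0, Matrix.map_apply, h1, h2]
    rw [Finset.sum_congr rfl (fun k _ => hterm k), Finset.sum_ite_eq' Finset.univ]
    simp only [Finset.mem_univ, if_true]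
    by_cases h : i = (⟨0, hd0⟩ : Fin d)
    · subst h
      simp [sigma, pf, eps]
    · rw [if_neg h]
      have hv : i.val ≠ 0 := fun hc => h (Fin.ext hc)
      exact eps_pf i.val hv
  have : Matrix.trace (U0 d hd * (U0 d hd).map (starRingEnd ℂ))
      = ∑ i : Fin d, if i = (⟨0, hd0⟩ : Fin d) then (1:ℂ) else -1 := by
    rw [Matrix.trace]
    exact Finset.sum_congr rfl (fun i _ => hdiag i)
  rw [this]
  have h2 : ∀ i : Fin d, (if i = (⟨0, hd0⟩ : Fin d) then (1:ℂ) else -1)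
      = (if i = (⟨0, hd0⟩ : Fin d) then (2:ℂ) else 0) - 1 := by
    intro i; split_ifs <;> ring
  rw [Finset.sum_congr rfl (fun i _ => h2 i), Finset.sum_sub_distrib,
    Finset.sum_ite_eq' Finset.univ, Finset.sum_const, Finset.card_univ, Fintype.card_fin]
  simp

end FefAux

namespace FefAux2

variable {d : ℕ}

lemma vec_eq (U : Matrix (Fin d) (Fin d) ℂ) (p : Fin d × Fin d) :
    (tensorI U *ᵥ psiPlus d) p = U p.1 p.2 * ((1 / Real.sqrt d : ℝ) : ℂ) := by
  show ∑ q : Fin d × Fin d, tensorI U p q * psiPlus d q = _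
  have hterm : ∀ q : Fin d × Fin d, tensorI U p q * psiPlus d q
      = if q = (p.2, p.2) then U p.1 p.2 * ((1 / Real.sqrt d : ℝ) : ℂ) else 0 := by
    intro q
    by_cases h : q = (p.2, p.2)
    · subst h; simp [tensorI, psiPlus]
    · rw [if_neg h]
      obtain ⟨k, l⟩ := q
      have h2 : ¬(p.2 = l) ∨ ¬(k = l) := by
        by_contra hc
        push_neg at hc
        exact h (by rw [Prod.mk.injEq]; exact ⟨hc.2.trans hc.1.symm, hc.1.symm⟩)
      rcases h2 with h1 | h1 <;> simp [tensorI, psiPlus, h1]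
  rw [Finset.sum_congr rfl (fun q _ => hterm q), Finset.sum_ite_eq' Finset.univ]
  simp

lemma csq (hd : 0 < d) : ((1 / Real.sqrt d : ℝ)) * ((1 / Real.sqrt d : ℝ)) = 1 / d := by
  rw [div_mul_div_comm, one_mul, Real.mul_self_sqrt (by positivity)]

lemma dot_self (hd : 0 < d) (U : Matrix (Fin d) (Fin d) ℂ)
    (hU : U ∈ Matrix.unitaryGroup (Fin d) ℂ) :
    star (tensorI U *ᵥ psiPlus d) ⬝ᵥ (tensorI U *ᵥ psiPlus d) = 1 := by
  have hrow : ∀ k, ∑ l, U k l * (starRingEnd ℂ) (U k l) = 1 := by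
    intro k
    have h : U * star U = 1 := hU.2
    have h2 := congrFun (congrFun (congrArg (fun M : Matrix (Fin d) (Fin d) ℂ => (M : Matrix (Fin d) (Fin d) ℂ)) h) k) k
    simp only [Matrix.mul_apply, Matrix.star_eq_conjTranspose, Matrix.conjTranspose_apply,
      Matrix.one_apply_eq] at h2
    exact h2
  show ∑ p : Fin d × Fin d, star ((tensorI U *ᵥ psiPlus d) p) * (tensorI U *ᵥ psiPlus d) p = 1
  have hterm : ∀ p : Fin d × Fin d, star ((tensorI U *ᵥ psiPlus d) p) * (tensorI U *ᵥ psiPlus d) p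
      = ((1/(d:ℝ) : ℝ) : ℂ) * (U p.1 p.2 * (starRingEnd ℂ) (U p.1 p.2)) := by
    intro p
    rw [vec_eq]
    have hc : (starRingEnd ℂ) (((1 / Real.sqrt d : ℝ) : ℂ)) = ((1 / Real.sqrt d : ℝ) : ℂ) :=
      Complex.conj_ofReal _
    rw [← csq hd]
    rw [Complex.star_def, _root_.map_mul, hc]
    push_cast
    ring
  rw [Finset.sum_congr rfl (fun p _ => hterm p), ← Finset.mul_sum, Fintype.sum_prod_type]
  rw [Finset.sum_congr rfl (fun k _ => hrow k)]
  rw [Finset.sum_const, Finset.card_univ, Fintype.card_fin]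
  rw [nsmul_eq_mul]
  push_cast
  have : (d : ℂ) ≠ 0 := Nat.cast_ne_zero.mpr hd.ne'
  field_simp

lemma dot_swap (hd : 0 < d) (U : Matrix (Fin d) (Fin d) ℂ) :
    star (tensorI U *ᵥ psiPlus d) ⬝ᵥ (swapOp d *ᵥ (tensorI U *ᵥ psiPlus d))
      = ((1/(d:ℝ) : ℝ) : ℂ) * Matrix.trace (U * U.map (starRingEnd ℂ)) := by
  have hswap : ∀ p : Fin d × Fin d, (swapOp d *ᵥ (tensorI U *ᵥ psiPlus d)) p
      = (tensorI U *ᵥ psiPlus d) (p.2, p.1) := by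
    intro p
    show ∑ q : Fin d × Fin d, swapOp d p q * (tensorI U *ᵥ psiPlus d) q = _
    have hterm : ∀ q : Fin d × Fin d, swapOp d p q * (tensorI U *ᵥ psiPlus d) q
        = if q = (p.2, p.1) then (tensorI U *ᵥ psiPlus d) (p.2, p.1) else 0 := by
      intro q
      by_cases h : q = (p.2, p.1)
      · subst h; simp [swapOp]
      · rw [if_neg h]
        have h2 : ¬(p.1 = q.2 ∧ p.2 = q.1) := by
          intro hc
          exact h (by rw [Prod.mk.injEq]; exact ⟨hc.2.symm, hc.1.symm⟩)
        simp [swapOp, h2]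
    rw [Finset.sum_congr rfl (fun q _ => hterm q), Finset.sum_ite_eq' Finset.univ]
    simp
  show ∑ p : Fin d × Fin d, star ((tensorI U *ᵥ psiPlus d) p) * (swapOp d *ᵥ (tensorI U *ᵥ psiPlus d)) p = _
  have hterm : ∀ p : Fin d × Fin d,
      star ((tensorI U *ᵥ psiPlus d) p) * (swapOp d *ᵥ (tensorI U *ᵥ psiPlus d)) p
      = ((1/(d:ℝ) : ℝ) : ℂ) * (U p.2 p.1 * (starRingEnd ℂ) (U p.1 p.2)) := by
    intro p
    rw [hswap p, vec_eq, vec_eq]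
    have hc : (starRingEnd ℂ) (((1 / Real.sqrt d : ℝ) : ℂ)) = ((1 / Real.sqrt d : ℝ) : ℂ) :=
      Complex.conj_ofReal _
    rw [← csq hd, Complex.star_def, _root_.map_mul, hc]
    push_cast
    ring
  rw [Finset.sum_congr rfl (fun p _ => hterm p), ← Finset.mul_sum]
  congr 1
  rw [Matrix.trace, Fintype.sum_prod_type]
  rw [Finset.sum_comm]
  refine Finset.sum_congr rfl (fun k _ => ?_)
  rw [Matrix.diag_apply, Matrix.mul_apply]
  refine Finset.sum_congr rfl (fun l _ => ?_)
  rw [Matrix.map_apply]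

lemma expr_eq (hd : 0 < d) (f : ℝ) (U : Matrix (Fin d) (Fin d) ℂ)
    (hU : U ∈ Matrix.unitaryGroup (Fin d) ℂ) :
    (star (tensorI U *ᵥ psiPlus d) ⬝ᵥ (werner d f *ᵥ (tensorI U *ᵥ psiPlus d))).re
      = ((d : ℝ) - f) / ((d : ℝ) ^ 3 - d)
        + (((d : ℝ) * f - 1) / ((d : ℝ) ^ 3 - d)) * (1/(d:ℝ))
          * (Matrix.trace (U * U.map (starRingEnd ℂ))).re := by
  set v := tensorI U *ᵥ psiPlus d with hv
  set a := ((d : ℝ) - f) / ((d : ℝ) ^ 3 - d) with ha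
  set b := ((d : ℝ) * f - 1) / ((d : ℝ) ^ 3 - d) with hb
  have hsplit : star v ⬝ᵥ (werner d f *ᵥ v)
      = a • (star v ⬝ᵥ v) + b • (star v ⬝ᵥ (swapOp d *ᵥ v)) := by
    rw [werner, Matrix.add_mulVec, Matrix.smul_mulVec, Matrix.smul_mulVec,
      Matrix.one_mulVec, dotProduct_add, dotProduct_smul, dotProduct_smul]
  rw [hsplit, dot_self hd U hU, dot_swap hd U]
  rw [Complex.real_smul, Complex.real_smul]
  simp only [Complex.add_re, Complex.mul_re, Complex.ofReal_re, Complex.ofReal_im,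
    Complex.one_re, Complex.one_im, Complex.mul_im]
  ring

end FefAux2

end FefWernerAux

open FefWernerAux FefWernerAux.FefAux FefWernerAux.FefAux2 in
/-- For `d` odd, `tr(UU*) ≥ −d + 2` for any unitary `U`; consequently the FEF
of the Werner state for `−1 ≤ f < 1/d` equals
`(d² − d²f + df + d − 2)/(d²(d²−1))`. -/
theorem fef_werner_odd (d : ℕ) (hd : 0 < d) (hodd : Odd d) :
    (∀ U ∈ Matrix.unitaryGroup (Fin d) ℂ,
      -(d : ℝ) + 2 ≤ (Matrix.trace (U * U.map (starRingEnd ℂ))).re) ∧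
    (∀ f : ℝ, -1 ≤ f → f < 1 / (d : ℝ) →
      fef d (werner d f) =
        ((d : ℝ) ^ 2 - (d : ℝ) ^ 2 * f + (d : ℝ) * f + (d : ℝ) - 2) /
          ((d : ℝ) ^ 2 * ((d : ℝ) ^ 2 - 1))) := by
  have part1 : ∀ U ∈ Matrix.unitaryGroup (Fin d) ℂ,
      -(d : ℝ) + 2 ≤ (Matrix.trace (U * U.map (starRingEnd ℂ))).re :=
    fun U hU => trace_bound d hodd U hU
  refine ⟨part1, ?_⟩
  intro f hf1 hf2
  have hdR : (1 : ℝ) ≤ (d : ℝ) := by exact_mod_cast hd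
  set a := ((d : ℝ) - f) / ((d : ℝ) ^ 3 - d) with ha
  set b := ((d : ℝ) * f - 1) / ((d : ℝ) ^ 3 - d) with hb
  set K := a + b * (1/(d:ℝ)) * (-(d:ℝ) + 2) with hK
  have hnum : (d : ℝ) * f - 1 < 0 := by
    have hd0 : (0:ℝ) < d := by linarith
    rw [lt_div_iff₀ hd0] at hf2
    linarith [hf2]
  have hden : (0:ℝ) ≤ (d : ℝ) ^ 3 - d := by
    have hfac : (d:ℝ)^3 - d = (d:ℝ) * (((d:ℝ) - 1) * ((d:ℝ) + 1)) := by ring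
    rw [hfac]
    exact mul_nonneg (by linarith) (mul_nonneg (by linarith) (by linarith))
  have hb0 : b ≤ 0 := div_nonpos_iff.mpr (Or.inr ⟨hnum.le, hden⟩)
  have hbd0 : b * (1/(d:ℝ)) ≤ 0 := by
    apply mul_nonpos_of_nonpos_of_nonneg hb0
    positivity
  set S := { x : ℝ | ∃ U ∈ Matrix.unitaryGroup (Fin d) ℂ,
    x = (star (tensorI U *ᵥ psiPlus d) ⬝ᵥ
      (werner d f *ᵥ (tensorI U *ᵥ psiPlus d))).re } with hS
  have hub : ∀ x ∈ S, x ≤ K := by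
    rintro x ⟨U, hU, rfl⟩
    rw [expr_eq hd f U hU, ← ha, ← hb, hK]
    have ht := part1 U hU
    have hmul := mul_le_mul_of_nonpos_left ht hbd0
    nlinarith [hmul]
  have hmem : K ∈ S := by
    refine ⟨U0 d hodd, U0_mem d hodd, ?_⟩
    rw [expr_eq hd f _ (U0_mem d hodd), U0_trace d hodd hd, hK, ← ha, ← hb]
    have h2d : ((2 : ℂ) - (d:ℕ)).re = -(d:ℝ) + 2 := by
      rw [Complex.sub_re, Complex.natCast_re, Complex.re_ofNat]
      ring
    rw [h2d]
  have hsup : fef d (werner d f) = K := by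
    rw [fef, ← hS]
    exact le_antisymm (csSup_le ⟨K, hmem⟩ hub) (le_csSup ⟨K, hub⟩ hmem)
  rw [hsup, hK, ha, hb]
  by_cases hd1 : d = 1
  · subst hd1
    norm_num
  · have hd2 : (2:ℝ) ≤ (d:ℝ) := by
      have : 2 ≤ d := by omega
      exact_mod_cast this
    have h1 : (d:ℝ) ≠ 0 := by linarith
    have h2 : (d:ℝ) ^ 3 - d ≠ 0 := by
      have hfac : (d:ℝ)^3 - d = (d:ℝ) * (((d:ℝ) - 1) * ((d:ℝ) + 1)) := by ring
      rw [hfac]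
      exact ne_of_gt (mul_pos (by linarith) (mul_pos (by linarith) (by linarith)))
    have h3 : (d:ℝ) ^ 2 * ((d:ℝ) ^ 2 - 1) ≠ 0 := by
      have h4 : (4:ℝ) ≤ (d:ℝ)^2 := by nlinarith [hd2]
      exact ne_of_gt (mul_pos (by positivity) (by linarith))
    field_simp
    ring
end
end
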